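/- arXiv:1505.01655 — 3 statements merged into one kernel-verified Lean document; each statement's English description precedes it below -/
import Mathlib

section
/- Let 𝔤 be a finite-dimensional real Lie algebra with Chevalley–Eilenberg differential d, let I ⊆ ℝ be an open interval containing 0, and let ω : I → Λ²𝔤* and ψ₊ : I → Λ³𝔤* be differentiable families of forms satisfying the first Hitchin flow equation (d/dt)ψ₊(t) = d(ω(t)) for all t ∈ I. If there is a continuous function c : I → ℝ with d(ω(t)) = c(t)·ψ₊(t) for all t ∈ I (i.e., the solution is coupled), then ψ₊(t) = f(t)·ψ₊(0) for all t ∈ I, where f(t) = exp(∫₀ᵗ c(s) ds). -/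
noncomputable section

open scoped TensorProduct

/-- `Form V k` is the space of (real-valued) k-forms on `V`, i.e. alternating
k-linear maps `V × ⋯ × V → ℝ`. -/
abbrev Form (V : Type*) [AddCommGroup V] [Module ℝ V] (k : ℕ) :=
  V [⋀^Fin k]→ₗ[ℝ] ℝ

/-- Wedge product of alternating forms (determinant/shuffle convention, so that
`(e¹ ∧ e²)(e₁, e₂) = 1`). -/
noncomputable def wedge {V : Type*} [AddCommGroup V] [Module ℝ V] {k l : ℕ}
    (f : Form V k) (g : Form V l) : Form V (k + l) :=
  ((TensorProduct.lid ℝ ℝ).toLinearMap.compAlternatingMap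
    (f.domCoprod g)).domDomCongr finSumFinEquiv
/-- The Chevalley–Eilenberg differential of a 2-form, as a function of three vectors:
`dα(x,y,z) = −α([x,y],z) + α([x,z],y) − α([y,z],x)`. -/
def d2 {𝔤 : Type*} [LieRing 𝔤] [LieAlgebra ℝ 𝔤] (α : Form 𝔤 2) (x y z : 𝔤) : ℝ :=
  -α ![⁅x, y⁆, z] + α ![⁅x, z⁆, y] - α ![⁅y, z⁆, x]

/-- The Chevalley–Eilenberg differential of a 3-form, as a function of four vectors. -/
def d3 {𝔤 : Type*} [LieRing 𝔤] [LieAlgebra ℝ 𝔤] (α : Form 𝔤 3) (x y z w : 𝔤) : ℝ :=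
  -α ![⁅x, y⁆, z, w] + α ![⁅x, z⁆, y, w] - α ![⁅x, w⁆, y, z]
    - α ![⁅y, z⁆, x, w] + α ![⁅y, w⁆, x, z] - α ![⁅z, w⁆, x, y]

/-- Let `𝔤` be a finite-dimensional real Lie algebra, `I ⊆ ℝ` an open
interval containing `0`, and let `ω : I → Λ²𝔤*`, `ψ₊ : I → Λ³𝔤*` be differentiable families
of forms satisfying the first Hitchin flow equation `(d/dt)ψ₊(t) = d(ω(t))` on `I`.
If `d(ω(t)) = c(t) ψ₊(t)` on `I` for a continuous `c : I → ℝ` (the solution is coupled),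
then `ψ₊(t) = f(t) ψ₊(0)` for all `t ∈ I`, where `f(t) = exp(∫₀ᵗ c(s) ds)`. -/
theorem statement0 {𝔤 : Type*} [LieRing 𝔤] [LieAlgebra ℝ 𝔤] [FiniteDimensional ℝ 𝔤]
    {I : Set ℝ} (hIopen : IsOpen I) (hIinterval : Convex ℝ I) (h0I : (0 : ℝ) ∈ I)
    (ω : ℝ → Form 𝔤 2) (ψp : ℝ → Form 𝔤 3)
    (hflow : ∀ t ∈ I, ∀ x y z : 𝔤,
      HasDerivAt (fun s => ψp s ![x, y, z]) (d2 (ω t) x y z) t)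
    (c : ℝ → ℝ) (hc : ContinuousOn c I)
    (hcoupled : ∀ t ∈ I, ∀ x y z : 𝔤, d2 (ω t) x y z = c t * ψp t ![x, y, z]) :
    ∀ t ∈ I, ψp t = Real.exp (∫ s in (0 : ℝ)..t, c s) • ψp 0 := by
  have hOrd : I.OrdConnected := hIinterval.ordConnected
  set F : ℝ → ℝ := fun u => ∫ s in (0:ℝ)..u, c s with hF
  have hint : ∀ u ∈ I, IntervalIntegrable c MeasureTheory.volume 0 u := fun u hu =>
    (hc.mono (hOrd.uIcc_subset h0I hu)).intervalIntegrable
  have hder : ∀ u ∈ I, HasDerivAt F (c u) u := by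
    intro u hu
    exact intervalIntegral.integral_hasDerivAt_right (hint u hu)
      (hc.stronglyMeasurableAtFilter hIopen u hu)
      (hc.continuousAt (hIopen.mem_nhds hu))
  have key : ∀ t ∈ I, ∀ x y z : 𝔤,
      ψp t ![x, y, z] = Real.exp (F t) * ψp 0 ![x, y, z] := by
    intro t ht x y z
    set g : ℝ → ℝ := fun s => ψp s ![x, y, z] with hg
    set h : ℝ → ℝ := fun s => Real.exp (-F s) * g s with hh
    have hderh : ∀ u ∈ I, HasDerivAt h 0 u := by
      intro u hu
      have hgd : HasDerivAt g (c u * g u) u := by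
        have := hflow u hu x y z
        rwa [hcoupled u hu x y z] at this
      have hed : HasDerivAt (fun s => Real.exp (-F s)) (Real.exp (-F u) * (-(c u))) u :=
        ((hder u hu).neg).exp
      have := hed.mul hgd
      have e : (0:ℝ) = Real.exp (-F u) * -c u * g u + Real.exp (-F u) * (c u * g u) := by ring
      rw [e]
      exact this
    have hconst : h t = h 0 := by
      have hdiff : DifferentiableOn ℝ h I := fun u hu =>
        ((hderh u hu).differentiableAt).differentiableWithinAt
      have hfd : ∀ u ∈ I, fderivWithin ℝ h I u = 0 := by
        intro u hu
        have := ((hderh u hu).hasFDerivAt.hasFDerivWithinAt).fderivWithin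
          (hIopen.uniqueDiffOn u hu)
        rw [this]; ext; simp
      exact hIinterval.is_const_of_fderivWithin_eq_zero hdiff hfd ht h0I
    have hF0 : F 0 = 0 := by simp [hF]
    have : Real.exp (-F t) * g t = g 0 := by
      simpa [hh, hF0] using hconst
    have hne : Real.exp (-F t) ≠ 0 := Real.exp_ne_zero _
    field_simp [Real.exp_neg] at this
    rw [hg] at this
    have h2 := congrArg (Real.exp (F t) * ·) this
    simp only [← mul_assoc, ← Real.exp_add, add_neg_cancel, Real.exp_zero, one_mul] at h2
    exact h2
  intro t ht
  ext v
  have hv : v = ![v 0, v 1, v 2] := by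
    ext i; fin_cases i <;> rfl
  rw [hv]
  have := key t ht (v 0) (v 1) (v 2)
  simpa using this
end
end

section
/- Let 𝔤 be a finite-dimensional real Lie algebra with Chevalley–Eilenberg differential d and I ⊆ ℝ an open interval containing 0. Let ω : I → Λ²𝔤* and ψ : I → Λ³𝔤* be differentiable, w₂ : I → Λ²𝔤* continuous, c : I → ℝ differentiable and s : I → ℝ continuous, and suppose that for all t ∈ I: (d/dt)ω(t) = (2/3)c(t)·ω(t) + w₂(t), (d/dt)ψ(t) = c(t)·ψ(t), d(w₂(t)) = −(1/4)s(t)·ψ(t), and c'(t) = −(1/3)c(t)² − (1/4)s(t). If d(ω(0)) = c(0)·ψ(0), then d(ω(t)) = c(t)·ψ(t) for every t ∈ I; that is, a solution of this flow system starting from a coupled structure stays coupled as long as it exists. -/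
noncomputable section

open scoped TensorProduct

/-- Let `𝔤` be a finite-dimensional real Lie algebra, `I ∋ 0` an open
interval, `ω, ψ` differentiable families of 2- resp. 3-forms, `w₂` a continuous family of
2-forms, `c` differentiable and `s` continuous, satisfying on `I` the flow system
`ω' = (2/3) c ω + w₂`, `ψ' = c ψ`, `d w₂ = −(1/4) s ψ`, `c' = −(1/3) c² − (1/4) s`.
If `dω(0) = c(0) ψ(0)`, then `dω(t) = c(t) ψ(t)` for every `t ∈ I`: a solution starting
from a coupled structure stays coupled as long as it exists. -/
theorem statement5 {𝔤 : Type*} [LieRing 𝔤] [LieAlgebra ℝ 𝔤] [FiniteDimensional ℝ 𝔤]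
    {I : Set ℝ} (hIopen : IsOpen I) (hIinterval : Convex ℝ I) (h0I : (0 : ℝ) ∈ I)
    (ω w₂ : ℝ → Form 𝔤 2) (ψ : ℝ → Form 𝔤 3) (c s : ℝ → ℝ)
    (hω : ∀ t ∈ I, ∀ x y : 𝔤, HasDerivAt (fun u => ω u ![x, y])
      ((2 / 3 : ℝ) * c t * ω t ![x, y] + w₂ t ![x, y]) t)
    (hψ : ∀ t ∈ I, ∀ x y z : 𝔤, HasDerivAt (fun u => ψ u ![x, y, z])
      (c t * ψ t ![x, y, z]) t)
    (hw₂cont : ∀ x y : 𝔤, ContinuousOn (fun t => w₂ t ![x, y]) I)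
    (hscont : ContinuousOn s I)
    (hdw₂ : ∀ t ∈ I, ∀ x y z : 𝔤, d2 (w₂ t) x y z = -(1 / 4 : ℝ) * s t * ψ t ![x, y, z])
    (hc : ∀ t ∈ I, HasDerivAt c (-(1 / 3 : ℝ) * (c t) ^ 2 - (1 / 4 : ℝ) * s t) t)
    (hinit : ∀ x y z : 𝔤, d2 (ω 0) x y z = c 0 * ψ 0 ![x, y, z]) :
    ∀ t ∈ I, ∀ x y z : 𝔤, d2 (ω t) x y z = c t * ψ t ![x, y, z] := by
  classical
  intro t ht x y z
  set f : ℝ → ℝ := fun u => d2 (ω u) x y z - c u * ψ u ![x, y, z] with hf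
  suffices hft : f t = 0 by
    have := hft; simp only [hf, sub_eq_zero] at this; exact this
  have hcc : ContinuousOn c I := fun u hu => (hc u hu).continuousAt.continuousWithinAt
  have hfder : ∀ u ∈ I, HasDerivAt f ((2 / 3 : ℝ) * c u * f u) u := by
    intro u hu
    have ha : HasDerivAt (fun v => d2 (ω v) x y z)
        ((2 / 3 : ℝ) * c u * d2 (ω u) x y z + d2 (w₂ u) x y z) u := by
      have h1 := hω u hu ⁅x, y⁆ z
      have h2 := hω u hu ⁅x, z⁆ y
      have h3 := hω u hu ⁅y, z⁆ x
      have hcomb := (h1.neg.add h2).sub h3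
      simp only [d2]
      refine hcomb.congr_deriv ?_
      ring
    have hb : HasDerivAt (fun v => c v * ψ v ![x, y, z])
        ((-(1 / 3 : ℝ) * (c u) ^ 2 - (1 / 4 : ℝ) * s u) * ψ u ![x, y, z]
          + c u * (c u * ψ u ![x, y, z])) u := (hc u hu).mul (hψ u hu x y z)
    have hab := ha.sub hb
    simp only [hf]
    refine hab.congr_deriv ?_
    rw [hdw₂ u hu x y z]
    ring
  set g : ℝ → ℝ := fun u => (2 / 3 : ℝ) * c u with hg
  have hgc : ContinuousOn g I := continuousOn_const.mul hcc
  set h : ℝ → ℝ := fun u => ∫ v in (0:ℝ)..u, g v with hh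
  have hOC : I.OrdConnected := hIinterval.ordConnected
  have hhder : ∀ u ∈ I, HasDerivAt h (g u) u := by
    intro u hu
    have hsub : Set.uIcc (0:ℝ) u ⊆ I := hOC.uIcc_subset h0I hu
    exact intervalIntegral.integral_hasDerivAt_right
      ((hgc.mono hsub).intervalIntegrable)
      (hgc.stronglyMeasurableAtFilter hIopen u hu)
      ((hgc u hu).continuousAt (hIopen.mem_nhds hu))
  set F : ℝ → ℝ := fun u => Real.exp (-h u) * f u with hF
  have hFder : ∀ u ∈ I, HasDerivWithinAt F 0 I u := by
    intro u hu
    have hd : HasDerivAt F (Real.exp (-h u) * (-(g u)) * f u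
        + Real.exp (-h u) * ((2 / 3 : ℝ) * c u * f u)) u :=
      (((hhder u hu).neg).exp.mul (hfder u hu))
    have h0 : Real.exp (-h u) * (-(g u)) * f u
        + Real.exp (-h u) * ((2 / 3 : ℝ) * c u * f u) = 0 := by
      simp only [hg]; ring
    rw [h0] at hd
    exact hd.hasDerivWithinAt
  have hF0 : F 0 = 0 := by
    have hf0 : f 0 = 0 := by simp [hf, hinit x y z]
    simp [hF, hf0]
  have hFt : F t = 0 := by
    have hb := hIinterval.norm_image_sub_le_of_norm_hasDerivWithin_le
      (f' := fun _ => (0 : ℝ)) (C := 0)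
      (fun u hu => hFder u hu) (fun u _ => by simp) h0I ht
    have h1 : ‖F t - F 0‖ ≤ 0 := hb.trans (by simp)
    have h2 := le_antisymm h1 (norm_nonneg _)
    rw [hF0, sub_zero] at h2
    simpa using h2
  have hexp : Real.exp (-h t) ≠ 0 := Real.exp_ne_zero _
  have hmul : Real.exp (-h t) * f t = 0 := hFt
  exact (mul_eq_zero.mp hmul).resolve_left hexp
end
end

section
/- On the Iwasawa Lie algebra 𝔦, set ω₀ := e¹²+e³⁴+e⁵⁶, ψ₊₀ := e¹³⁵−e¹⁴⁶−e²³⁶−e²⁴⁵, ψ₋₀ := e¹³⁶+e¹⁴⁵+e²³⁵−e²⁴⁶. Then (ω₀, ψ₊₀) is a coupled SU(3)-structure on 𝔦 with d(ω₀) = −ψ₊₀ (coupled constant c = −1), its associated 3-form is ψ₋₀, the 2-form w₂ := −(4/3)e¹² − (4/3)e³⁴ + (8/3)e⁵⁶ is a torsion form for it (i.e., w₂∧ω₀∧ω₀ = 0, w₂(J_{ψ₊₀}x, J_{ψ₊₀}y) = w₂(x,y), and d(ψ₋₀) = (2/3)ω₀∧ω₀ − w₂∧ω₀), and d(w₂)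 = −(8/3)ψ₊₀, so d(w₂) is proportional to ψ₊₀ with factor −(1/4)|w₂|² = −8/3. -/
noncomputable section

open scoped TensorProduct

/-- `λ(K) = (1/6) tr(K²)`. -/
def lamOf {V : Type*} [AddCommGroup V] [Module ℝ V] (K : V →ₗ[ℝ] V) : ℝ :=
  (1 / 6 : ℝ) * LinearMap.trace ℝ V (K ∘ₗ K)

/-- `J = −K / √(−λ(K))`. -/
def Jof {V : Type*} [AddCommGroup V] [Module ℝ V] (K : V →ₗ[ℝ] V) : V →ₗ[ℝ] V :=
  (-(Real.sqrt (-lamOf K))⁻¹) • K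

/-- `K` is the endomorphism associated with the 3-form `ψ` via the volume form
`Ω = (1/6) ω³`, i.e. `i_{K v} Ω = (i_v ψ) ∧ ψ` for all `v`. -/
def IsKOf {V : Type*} [AddCommGroup V] [Module ℝ V]
    (ω : Form V 2) (ψ : Form V 3) (K : V →ₗ[ℝ] V) : Prop :=
  ∀ v : V, ((1 / 6 : ℝ) • wedge (wedge ω ω) ω).curryLeft (K v)
    = wedge (ψ.curryLeft v) ψ

/-- An SU(3)-structure `(ω, ψp)` on `V`, with associated almost complex structure `J`
and associated 3-form `ψm` (so that `Ψ = ψp + i ψm` and `ψm(x,y,z) = −ψp(Jx,y,z)`):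
`ω³ ≠ 0`, `λ(ψp) < 0`, `ω ∧ ψp = 0`, `h(x,y) := ω(x,Jy)` is symmetric and positive
definite, and `ψp ∧ ψm = (2/3) ω³`. -/
structure IsSU3 {V : Type*} [AddCommGroup V] [Module ℝ V]
    (ω : Form V 2) (ψp ψm : Form V 3) (J : V →ₗ[ℝ] V) : Prop where
  vol_ne : wedge (wedge ω ω) ω ≠ 0
  hJ : ∃ K : V →ₗ[ℝ] V, IsKOf ω ψp K ∧ lamOf K < 0 ∧ J = Jof K
  hψm : ∀ x y z : V, ψm ![x, y, z] = -ψp ![J x, y, z]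
  compat : wedge ω ψp = 0
  h_symm : ∀ x y : V, ω ![x, J y] = ω ![y, J x]
  h_posdef : ∀ x : V, x ≠ 0 → 0 < ω ![x, J x]
  normalized : wedge ψp ψm = (2 / 3 : ℝ) • wedge (wedge ω ω) ω

/-- A coupled SU(3)-structure with coupled constant `c ≠ 0`: `dω = c ψ₊`. -/
structure IsCoupledSU3 {𝔤 : Type*} [LieRing 𝔤] [LieAlgebra ℝ 𝔤]
    (ω : Form 𝔤 2) (ψp ψm : Form 𝔤 3) (J : 𝔤 →ₗ[ℝ] 𝔤) (c : ℝ) : Prop where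
  toIsSU3 : IsSU3 ω ψp ψm J
  c_ne : c ≠ 0
  coupled : ∀ x y z : 𝔤, d2 ω x y z = c * ψp ![x, y, z]

/-- `w₂` is a torsion form for the coupled SU(3)-structure `(ω, ψp)` with coupled
constant `c`: it is primitive (`w₂ ∧ ω² = 0`), of type (1,1) (`w₂(J·,J·) = w₂`), and
`dψ₋ = −(2/3) c ω² − w₂ ∧ ω`. -/
structure IsTorsionForm {𝔤 : Type*} [LieRing 𝔤] [LieAlgebra ℝ 𝔤]
    (ω : Form 𝔤 2) (ψp ψm : Form 𝔤 3) (J : 𝔤 →ₗ[ℝ] 𝔤) (c : ℝ) (w₂ : Form 𝔤 2) : Prop where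
  primitive : wedge (wedge w₂ ω) ω = 0
  type11 : ∀ x y : 𝔤, w₂ ![J x, J y] = w₂ ![x, y]
  dψm : ∀ x y z w : 𝔤, d3 ψm x y z w
    = -(2 / 3 : ℝ) * c * wedge ω ω ![x, y, z, w] - wedge w₂ ω ![x, y, z, w]
section VecEval
variable {α : Type*} (a b c d e f : α)
lemma vmk0 : ![a, b, c, d, e, f] ⟨0, by omega⟩ = a := rfl
lemma vmk1 : ![a, b, c, d, e, f] ⟨1, by omega⟩ = b := rfl
lemma vmk2 : ![a, b, c, d, e, f] ⟨2, by omega⟩ = c := rfl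
lemma vmk3 : ![a, b, c, d, e, f] ⟨3, by omega⟩ = d := rfl
lemma vmk4 : ![a, b, c, d, e, f] ⟨4, by omega⟩ = e := rfl
lemma vmk5 : ![a, b, c, d, e, f] ⟨5, by omega⟩ = f := rfl
end VecEval
/-- The underlying type of the Iwasawa Lie algebra: `ℝ⁶` with coordinates indexed by `Fin 6`. -/
def Iw : Type := Fin 6 → ℝ

instance : AddCommGroup Iw := inferInstanceAs (AddCommGroup (Fin 6 → ℝ))
instance : Module ℝ Iw := inferInstanceAs (Module ℝ (Fin 6 → ℝ))

/-- The bracket of the Iwasawa Lie algebra: with `e₁, …, e₆` the standard basis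
(0-indexed as `e 0, …, e 5`), the only nonzero brackets are
`[e₁,e₄] = −e₅`, `[e₂,e₃] = −e₅`, `[e₁,e₃] = −e₆`, `[e₂,e₄] = e₆`;
equivalently `de⁵ = e¹⁴ + e²³`, `de⁶ = e¹³ − e²⁴`. -/
def iwBr (x y : Iw) : Iw :=
  ![0, 0, 0, 0,
    -(x 0 * y 3 - x 3 * y 0) - (x 1 * y 2 - x 2 * y 1),
    -(x 0 * y 2 - x 2 * y 0) + (x 1 * y 3 - x 3 * y 1)]

instance : Bracket Iw Iw := ⟨iwBr⟩

instance : LieRing Iw where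
  add_lie x y z := by
    show iwBr (x + y) z = iwBr x z + iwBr y z
    have hadd : ∀ (a b : Iw) (j : Fin 6), (a + b) j = a j + b j := fun _ _ _ => rfl
    funext i
    rw [hadd]
    fin_cases i <;>
      simp only [iwBr, hadd, vmk0, vmk1, vmk2, vmk3, vmk4, vmk5] <;> ring
  lie_add x y z := by
    show iwBr x (y + z) = iwBr x y + iwBr x z
    have hadd : ∀ (a b : Iw) (j : Fin 6), (a + b) j = a j + b j := fun _ _ _ => rfl
    funext i
    rw [hadd]
    fin_cases i <;>
      simp only [iwBr, hadd, vmk0, vmk1, vmk2, vmk3, vmk4, vmk5] <;> ring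
  lie_self x := by
    show iwBr x x = 0
    have h0 : ∀ j : Fin 6, (0 : Iw) j = 0 := fun _ => rfl
    funext i
    fin_cases i <;>
      simp only [iwBr, h0, vmk0, vmk1, vmk2, vmk3, vmk4, vmk5] <;> ring
  leibniz_lie x y z := by
    show iwBr x (iwBr y z) = iwBr (iwBr x y) z + iwBr y (iwBr x z)
    have hadd : ∀ (a b : Iw) (j : Fin 6), (a + b) j = a j + b j := fun _ _ _ => rfl
    funext i
    rw [hadd]
    fin_cases i <;>
      simp only [iwBr, hadd, vmk0, vmk1, vmk2, vmk3, vmk4, vmk5,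
        Matrix.cons_val_zero, Matrix.cons_val_one, Matrix.head_cons,
        Matrix.cons_val_two, Matrix.cons_val_three, Matrix.tail_cons] <;> ring

instance : LieAlgebra ℝ Iw where
  lie_smul t x y := by
    show iwBr x (t • y) = t • iwBr x y
    have hs : ∀ (a : Iw) (j : Fin 6), (t • a) j = t * a j := fun _ _ => rfl
    funext i
    rw [hs]
    fin_cases i <;>
      simp only [iwBr, hs, vmk0, vmk1, vmk2, vmk3, vmk4, vmk5] <;> ring

/-- The coordinate functions on `Iw`, i.e. the dual basis `e¹, …, e⁶` (0-indexed). -/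
def iwCoord (i : Fin 6) : Iw →ₗ[ℝ] ℝ where
  toFun x := x i
  map_add' _ _ := rfl
  map_smul' _ _ := rfl

/-- The dual basis 1-forms `e^i` on the Iwasawa Lie algebra. -/
def iwE (i : Fin 6) : Form Iw 1 :=
  AlternatingMap.ofSubsingleton ℝ Iw ℝ (0 : Fin 1) (iwCoord i)

/-- The 2-forms `e^{ij} = e^i ∧ e^j` on the Iwasawa Lie algebra. -/
def iwE2 (i j : Fin 6) : Form Iw 2 := wedge (iwE i) (iwE j)

/-- The 3-forms `e^{ijk} = e^i ∧ e^j ∧ e^k` on the Iwasawa Lie algebra. -/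
def iwE3 (i j k : Fin 6) : Form Iw 3 := wedge (wedge (iwE i) (iwE j)) (iwE k)

/-- `ω₀ = e¹² + e³⁴ + e⁵⁶` on the Iwasawa Lie algebra. -/
def iwOm0 : Form Iw 2 := iwE2 0 1 + iwE2 2 3 + iwE2 4 5

/-- `ψ₊₀ = e¹³⁵ − e¹⁴⁶ − e²³⁶ − e²⁴⁵` on the Iwasawa Lie algebra. -/
def iwPsip0 : Form Iw 3 := iwE3 0 2 4 - iwE3 0 3 5 - iwE3 1 2 5 - iwE3 1 3 4

/-- `ψ₋₀ = e¹³⁶ + e¹⁴⁵ + e²³⁵ − e²⁴⁶` on the Iwasawa Lie algebra. -/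
def iwPsim0 : Form Iw 3 := iwE3 0 2 5 + iwE3 0 3 4 + iwE3 1 2 4 - iwE3 1 3 5

/-- `w₂ = −(4/3) e¹² − (4/3) e³⁴ + (8/3) e⁵⁶` on the Iwasawa Lie algebra. -/
def iwW2 : Form Iw 2 :=
  (-(4 : ℝ) / 3) • iwE2 0 1 + (-(4 : ℝ) / 3) • iwE2 2 3 + ((8 : ℝ) / 3) • iwE2 4 5


section WedgeMachinery
open Equiv AlternatingMap
set_option maxHeartbeats 1600000
set_option synthInstance.maxHeartbeats 400000
set_option linter.unnecessarySeqFocus false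

variable {V : Type*} [AddCommGroup V] [Module ℝ V]

instance mscFintype (k l : ℕ) :
    Fintype (Quotient (QuotientGroup.leftRel (Equiv.Perm.sumCongrHom (Fin k) (Fin l)).range)) :=
  @Quotient.fintype _ _ (QuotientGroup.leftRel _) (QuotientGroup.leftRelDecidable _)

lemma lid_summand {k l : ℕ} (f : Form V k) (g : Form V l) (σ : Equiv.Perm (Fin k ⊕ Fin l))
    (w : Fin k ⊕ Fin l → V) :
    (TensorProduct.lid ℝ ℝ).toLinearMap (domCoprod.summand f g (Quotient.mk'' σ) w)
      = ((Equiv.Perm.sign σ : ℤˣ) : ℤ) *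
        (f (fun i => w (σ (Sum.inl i))) * g (fun i => w (σ (Sum.inr i)))) := by
  rw [domCoprod.summand_mk'']
  rw [MultilinearMap.smul_apply, MultilinearMap.domDomCongr_apply,
    MultilinearMap.domCoprod_apply]
  rw [Units.smul_def, map_zsmul]
  rw [LinearEquiv.coe_coe, TensorProduct.lid_tmul, smul_eq_mul, zsmul_eq_mul]
  rfl

lemma wedge_eq_sum {k l : ℕ} (f : Form V k) (g : Form V l) (v : Fin (k + l) → V) :
    wedge f g v = ∑ q : Equiv.Perm.ModSumCongr (Fin k) (Fin l),
      (TensorProduct.lid ℝ ℝ).toLinearMap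
        (domCoprod.summand f g q (v ∘ finSumFinEquiv)) := by
  rw [wedge]
  rw [AlternatingMap.domDomCongr_apply, LinearMap.compAlternatingMap_apply]
  rw [AlternatingMap.domCoprod_apply]
  rw [MultilinearMap.sum_apply]
  exact map_sum ((TensorProduct.lid ℝ ℝ).toLinearMap) _ _

lemma sum_msc {k l N : ℕ} (e : Fin N → Equiv.Perm (Fin k ⊕ Fin l))
    (hinj : Function.Injective fun i => Finset.univ.image ((e i) ∘ Sum.inl))
    (hcard : N * (Nat.factorial k * Nat.factorial l) = Nat.factorial (k + l))
    {M : Type*} [AddCommMonoid M] (F : Equiv.Perm.ModSumCongr (Fin k) (Fin l) → M) :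
    ∑ q, F q = ∑ i, F (Quotient.mk'' (e i)) := by
  refine (Fintype.sum_bijective (fun i => (Quotient.mk'' (e i))) ?_ _ _ (fun i => rfl)).symm
  rw [Fintype.bijective_iff_injective_and_card]
  constructor
  · intro i j hij
    apply hinj
    obtain ⟨⟨sl, sr⟩, h⟩ := QuotientGroup.leftRel_apply.mp (Quotient.exact' hij)
    have h2 : e j = e i * Equiv.Perm.sumCongrHom _ _ (sl, sr) := by
      rw [h]; group
    have h3 : ((e j) ∘ Sum.inl) = ((e i) ∘ Sum.inl) ∘ sl := by
      funext a
      simp [h2, Equiv.Perm.sumCongrHom, Equiv.Perm.mul_apply]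
    show Finset.univ.image ((e i) ∘ Sum.inl) = Finset.univ.image ((e j) ∘ Sum.inl)
    have h4 : Finset.univ.image (((e i) ∘ Sum.inl) ∘ sl) = Finset.univ.image ((e i) ∘ Sum.inl) := by
      rw [← Finset.image_image, Finset.image_univ_of_surjective sl.surjective]
    rw [h3, h4]
  · have hq : Nat.card (Equiv.Perm.ModSumCongr (Fin k) (Fin l))
        * (Nat.factorial k * Nat.factorial l) = Nat.factorial (k + l) := by
      have := Subgroup.card_eq_card_quotient_mul_card_subgroup
        (Equiv.Perm.sumCongrHom (Fin k) (Fin l)).range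
      have hr : Nat.card (Equiv.Perm.sumCongrHom (Fin k) (Fin l)).range
          = Nat.factorial k * Nat.factorial l := by
        rw [Nat.card_eq_fintype_card, Equiv.Perm.sumCongrHom.card_range]
        simp [Fintype.card_perm]
      have hg : Nat.card (Equiv.Perm (Fin k ⊕ Fin l)) = Nat.factorial (k + l) := by
        rw [Nat.card_eq_fintype_card, Fintype.card_perm]
        simp
      rw [hr, hg] at this
      exact this.symm
    have hN : N = Nat.card (Equiv.Perm.ModSumCongr (Fin k) (Fin l)) := by
      have hpos : 0 < Nat.factorial k * Nat.factorial l :=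
        Nat.mul_pos (Nat.factorial_pos k) (Nat.factorial_pos l)
      exact Nat.eq_of_mul_eq_mul_right hpos (by rw [hcard, hq])
    rw [Fintype.card_fin, hN, Nat.card_eq_fintype_card]
    exact Fintype.card_congr (Equiv.refl _)

lemma lid_summand_pos {k l : ℕ} (f : Form V k) (g : Form V l)
    (σ : Equiv.Perm (Fin k ⊕ Fin l)) (w : Fin k ⊕ Fin l → V)
    (h : Equiv.Perm.sign σ = 1) :
    (TensorProduct.lid ℝ ℝ).toLinearMap (domCoprod.summand f g (Quotient.mk'' σ) w)
      = f (fun i => w (σ (Sum.inl i))) * g (fun i => w (σ (Sum.inr i))) := by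
  rw [lid_summand, h]; norm_num

lemma lid_summand_neg {k l : ℕ} (f : Form V k) (g : Form V l)
    (σ : Equiv.Perm (Fin k ⊕ Fin l)) (w : Fin k ⊕ Fin l → V)
    (h : Equiv.Perm.sign σ = -1) :
    (TensorProduct.lid ℝ ℝ).toLinearMap (domCoprod.summand f g (Quotient.mk'' σ) w)
      = -(f (fun i => w (σ (Sum.inl i))) * g (fun i => w (σ (Sum.inr i)))) := by
  rw [lid_summand, h]; norm_num

def p11_0 : Equiv.Perm (Fin 1 ⊕ Fin 1) :=
  ⟨Sum.elim ![Sum.inl 0] ![Sum.inr 0],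
   Sum.elim ![Sum.inl 0] ![Sum.inr 0], by decide, by decide⟩

def p11_1 : Equiv.Perm (Fin 1 ⊕ Fin 1) :=
  ⟨Sum.elim ![Sum.inr 0] ![Sum.inl 0],
   Sum.elim ![Sum.inr 0] ![Sum.inl 0], by decide, by decide⟩

def e11 : Fin 2 → Equiv.Perm (Fin 1 ⊕ Fin 1) :=
  ![p11_0, p11_1]

lemma wedge11_apply (f : Form V 1) (g : Form V 1) (v : Fin 2 → V) :
    wedge f g v = (f ![v 0] * g ![v 1]) +
      (-(f ![v 1] * g ![v 0])) := by
  rw [wedge_eq_sum, sum_msc e11 (by decide) (by norm_num [Nat.factorial])]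
  simp only [Fin.sum_univ_succ, Fin.sum_univ_zero, e11, Matrix.cons_val_zero,
    Matrix.cons_val_succ, Matrix.cons_val_one, Matrix.head_cons, Matrix.cons_val_fin_one]
  rw [lid_summand_pos f g p11_0 _ (by decide),
    lid_summand_neg f g p11_1 _ (by decide)]
  have tA0 : (fun i => (v ∘ finSumFinEquiv) (p11_0 (Sum.inl i))) = ![v 0] := by
    funext i; fin_cases i <;> rfl
  have tB0 : (fun i => (v ∘ finSumFinEquiv) (p11_0 (Sum.inr i))) = ![v 1] := by
    funext i; fin_cases i <;> rfl
  have tA1 : (fun i => (v ∘ finSumFinEquiv) (p11_1 (Sum.inl i))) = ![v 1] := by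
    funext i; fin_cases i <;> rfl
  have tB1 : (fun i => (v ∘ finSumFinEquiv) (p11_1 (Sum.inr i))) = ![v 0] := by
    funext i; fin_cases i <;> rfl
  rw [tA0, tB0, tA1, tB1]
  ring

def p21_0 : Equiv.Perm (Fin 2 ⊕ Fin 1) :=
  ⟨Sum.elim ![Sum.inl 0, Sum.inl 1] ![Sum.inr 0],
   Sum.elim ![Sum.inl 0, Sum.inl 1] ![Sum.inr 0], by decide, by decide⟩

def p21_1 : Equiv.Perm (Fin 2 ⊕ Fin 1) :=
  ⟨Sum.elim ![Sum.inl 0, Sum.inr 0] ![Sum.inl 1],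
   Sum.elim ![Sum.inl 0, Sum.inr 0] ![Sum.inl 1], by decide, by decide⟩

def p21_2 : Equiv.Perm (Fin 2 ⊕ Fin 1) :=
  ⟨Sum.elim ![Sum.inl 1, Sum.inr 0] ![Sum.inl 0],
   Sum.elim ![Sum.inr 0, Sum.inl 0] ![Sum.inl 1], by decide, by decide⟩

def e21 : Fin 3 → Equiv.Perm (Fin 2 ⊕ Fin 1) :=
  ![p21_0, p21_1, p21_2]

lemma wedge21_apply (f : Form V 2) (g : Form V 1) (v : Fin 3 → V) :
    wedge f g v = (f ![v 0, v 1] * g ![v 2]) +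
      (-(f ![v 0, v 2] * g ![v 1])) +
      (f ![v 1, v 2] * g ![v 0]) := by
  rw [wedge_eq_sum, sum_msc e21 (by decide) (by norm_num [Nat.factorial])]
  simp only [Fin.sum_univ_succ, Fin.sum_univ_zero, e21, Matrix.cons_val_zero,
    Matrix.cons_val_succ, Matrix.cons_val_one, Matrix.head_cons, Matrix.cons_val_fin_one]
  rw [lid_summand_pos f g p21_0 _ (by decide),
    lid_summand_neg f g p21_1 _ (by decide),
    lid_summand_pos f g p21_2 _ (by decide)]
  have tA0 : (fun i => (v ∘ finSumFinEquiv) (p21_0 (Sum.inl i))) = ![v 0, v 1] := by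
    funext i; fin_cases i <;> rfl
  have tB0 : (fun i => (v ∘ finSumFinEquiv) (p21_0 (Sum.inr i))) = ![v 2] := by
    funext i; fin_cases i <;> rfl
  have tA1 : (fun i => (v ∘ finSumFinEquiv) (p21_1 (Sum.inl i))) = ![v 0, v 2] := by
    funext i; fin_cases i <;> rfl
  have tB1 : (fun i => (v ∘ finSumFinEquiv) (p21_1 (Sum.inr i))) = ![v 1] := by
    funext i; fin_cases i <;> rfl
  have tA2 : (fun i => (v ∘ finSumFinEquiv) (p21_2 (Sum.inl i))) = ![v 1, v 2] := by
    funext i; fin_cases i <;> rfl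
  have tB2 : (fun i => (v ∘ finSumFinEquiv) (p21_2 (Sum.inr i))) = ![v 0] := by
    funext i; fin_cases i <;> rfl
  rw [tA0, tB0, tA1, tB1, tA2, tB2]
  ring

def p22_0 : Equiv.Perm (Fin 2 ⊕ Fin 2) :=
  ⟨Sum.elim ![Sum.inl 0, Sum.inl 1] ![Sum.inr 0, Sum.inr 1],
   Sum.elim ![Sum.inl 0, Sum.inl 1] ![Sum.inr 0, Sum.inr 1], by decide, by decide⟩

def p22_1 : Equiv.Perm (Fin 2 ⊕ Fin 2) :=
  ⟨Sum.elim ![Sum.inl 0, Sum.inr 0] ![Sum.inl 1, Sum.inr 1],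
   Sum.elim ![Sum.inl 0, Sum.inr 0] ![Sum.inl 1, Sum.inr 1], by decide, by decide⟩

def p22_2 : Equiv.Perm (Fin 2 ⊕ Fin 2) :=
  ⟨Sum.elim ![Sum.inl 0, Sum.inr 1] ![Sum.inl 1, Sum.inr 0],
   Sum.elim ![Sum.inl 0, Sum.inr 0] ![Sum.inr 1, Sum.inl 1], by decide, by decide⟩

def p22_3 : Equiv.Perm (Fin 2 ⊕ Fin 2) :=
  ⟨Sum.elim ![Sum.inl 1, Sum.inr 0] ![Sum.inl 0, Sum.inr 1],
   Sum.elim ![Sum.inr 0, Sum.inl 0] ![Sum.inl 1, Sum.inr 1], by decide, by decide⟩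

def p22_4 : Equiv.Perm (Fin 2 ⊕ Fin 2) :=
  ⟨Sum.elim ![Sum.inl 1, Sum.inr 1] ![Sum.inl 0, Sum.inr 0],
   Sum.elim ![Sum.inr 0, Sum.inl 0] ![Sum.inr 1, Sum.inl 1], by decide, by decide⟩

def p22_5 : Equiv.Perm (Fin 2 ⊕ Fin 2) :=
  ⟨Sum.elim ![Sum.inr 0, Sum.inr 1] ![Sum.inl 0, Sum.inl 1],
   Sum.elim ![Sum.inr 0, Sum.inr 1] ![Sum.inl 0, Sum.inl 1], by decide, by decide⟩

def e22 : Fin 6 → Equiv.Perm (Fin 2 ⊕ Fin 2) :=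
  ![p22_0, p22_1, p22_2, p22_3, p22_4, p22_5]

lemma wedge22_apply (f : Form V 2) (g : Form V 2) (v : Fin 4 → V) :
    wedge f g v = (f ![v 0, v 1] * g ![v 2, v 3]) +
      (-(f ![v 0, v 2] * g ![v 1, v 3])) +
      (f ![v 0, v 3] * g ![v 1, v 2]) +
      (f ![v 1, v 2] * g ![v 0, v 3]) +
      (-(f ![v 1, v 3] * g ![v 0, v 2])) +
      (f ![v 2, v 3] * g ![v 0, v 1]) := by
  rw [wedge_eq_sum, sum_msc e22 (by decide) (by norm_num [Nat.factorial])]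
  simp only [Fin.sum_univ_succ, Fin.sum_univ_zero, e22, Matrix.cons_val_zero,
    Matrix.cons_val_succ, Matrix.cons_val_one, Matrix.head_cons, Matrix.cons_val_fin_one]
  rw [lid_summand_pos f g p22_0 _ (by decide),
    lid_summand_neg f g p22_1 _ (by decide),
    lid_summand_pos f g p22_2 _ (by decide),
    lid_summand_pos f g p22_3 _ (by decide),
    lid_summand_neg f g p22_4 _ (by decide),
    lid_summand_pos f g p22_5 _ (by decide)]
  have tA0 : (fun i => (v ∘ finSumFinEquiv) (p22_0 (Sum.inl i))) = ![v 0, v 1] := by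
    funext i; fin_cases i <;> rfl
  have tB0 : (fun i => (v ∘ finSumFinEquiv) (p22_0 (Sum.inr i))) = ![v 2, v 3] := by
    funext i; fin_cases i <;> rfl
  have tA1 : (fun i => (v ∘ finSumFinEquiv) (p22_1 (Sum.inl i))) = ![v 0, v 2] := by
    funext i; fin_cases i <;> rfl
  have tB1 : (fun i => (v ∘ finSumFinEquiv) (p22_1 (Sum.inr i))) = ![v 1, v 3] := by
    funext i; fin_cases i <;> rfl
  have tA2 : (fun i => (v ∘ finSumFinEquiv) (p22_2 (Sum.inl i))) = ![v 0, v 3] := by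
    funext i; fin_cases i <;> rfl
  have tB2 : (fun i => (v ∘ finSumFinEquiv) (p22_2 (Sum.inr i))) = ![v 1, v 2] := by
    funext i; fin_cases i <;> rfl
  have tA3 : (fun i => (v ∘ finSumFinEquiv) (p22_3 (Sum.inl i))) = ![v 1, v 2] := by
    funext i; fin_cases i <;> rfl
  have tB3 : (fun i => (v ∘ finSumFinEquiv) (p22_3 (Sum.inr i))) = ![v 0, v 3] := by
    funext i; fin_cases i <;> rfl
  have tA4 : (fun i => (v ∘ finSumFinEquiv) (p22_4 (Sum.inl i))) = ![v 1, v 3] := by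
    funext i; fin_cases i <;> rfl
  have tB4 : (fun i => (v ∘ finSumFinEquiv) (p22_4 (Sum.inr i))) = ![v 0, v 2] := by
    funext i; fin_cases i <;> rfl
  have tA5 : (fun i => (v ∘ finSumFinEquiv) (p22_5 (Sum.inl i))) = ![v 2, v 3] := by
    funext i; fin_cases i <;> rfl
  have tB5 : (fun i => (v ∘ finSumFinEquiv) (p22_5 (Sum.inr i))) = ![v 0, v 1] := by
    funext i; fin_cases i <;> rfl
  rw [tA0, tB0, tA1, tB1, tA2, tB2, tA3, tB3, tA4, tB4, tA5, tB5]
  ring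

def p23_0 : Equiv.Perm (Fin 2 ⊕ Fin 3) :=
  ⟨Sum.elim ![Sum.inl 0, Sum.inl 1] ![Sum.inr 0, Sum.inr 1, Sum.inr 2],
   Sum.elim ![Sum.inl 0, Sum.inl 1] ![Sum.inr 0, Sum.inr 1, Sum.inr 2], by decide, by decide⟩

def p23_1 : Equiv.Perm (Fin 2 ⊕ Fin 3) :=
  ⟨Sum.elim ![Sum.inl 0, Sum.inr 0] ![Sum.inl 1, Sum.inr 1, Sum.inr 2],
   Sum.elim ![Sum.inl 0, Sum.inr 0] ![Sum.inl 1, Sum.inr 1, Sum.inr 2], by decide, by decide⟩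

def p23_2 : Equiv.Perm (Fin 2 ⊕ Fin 3) :=
  ⟨Sum.elim ![Sum.inl 0, Sum.inr 1] ![Sum.inl 1, Sum.inr 0, Sum.inr 2],
   Sum.elim ![Sum.inl 0, Sum.inr 0] ![Sum.inr 1, Sum.inl 1, Sum.inr 2], by decide, by decide⟩

def p23_3 : Equiv.Perm (Fin 2 ⊕ Fin 3) :=
  ⟨Sum.elim ![Sum.inl 0, Sum.inr 2] ![Sum.inl 1, Sum.inr 0, Sum.inr 1],
   Sum.elim ![Sum.inl 0, Sum.inr 0] ![Sum.inr 1, Sum.inr 2, Sum.inl 1], by decide, by decide⟩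

def p23_4 : Equiv.Perm (Fin 2 ⊕ Fin 3) :=
  ⟨Sum.elim ![Sum.inl 1, Sum.inr 0] ![Sum.inl 0, Sum.inr 1, Sum.inr 2],
   Sum.elim ![Sum.inr 0, Sum.inl 0] ![Sum.inl 1, Sum.inr 1, Sum.inr 2], by decide, by decide⟩

def p23_5 : Equiv.Perm (Fin 2 ⊕ Fin 3) :=
  ⟨Sum.elim ![Sum.inl 1, Sum.inr 1] ![Sum.inl 0, Sum.inr 0, Sum.inr 2],
   Sum.elim ![Sum.inr 0, Sum.inl 0] ![Sum.inr 1, Sum.inl 1, Sum.inr 2], by decide, by decide⟩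

def p23_6 : Equiv.Perm (Fin 2 ⊕ Fin 3) :=
  ⟨Sum.elim ![Sum.inl 1, Sum.inr 2] ![Sum.inl 0, Sum.inr 0, Sum.inr 1],
   Sum.elim ![Sum.inr 0, Sum.inl 0] ![Sum.inr 1, Sum.inr 2, Sum.inl 1], by decide, by decide⟩

def p23_7 : Equiv.Perm (Fin 2 ⊕ Fin 3) :=
  ⟨Sum.elim ![Sum.inr 0, Sum.inr 1] ![Sum.inl 0, Sum.inl 1, Sum.inr 2],
   Sum.elim ![Sum.inr 0, Sum.inr 1] ![Sum.inl 0, Sum.inl 1, Sum.inr 2], by decide, by decide⟩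

def p23_8 : Equiv.Perm (Fin 2 ⊕ Fin 3) :=
  ⟨Sum.elim ![Sum.inr 0, Sum.inr 2] ![Sum.inl 0, Sum.inl 1, Sum.inr 1],
   Sum.elim ![Sum.inr 0, Sum.inr 1] ![Sum.inl 0, Sum.inr 2, Sum.inl 1], by decide, by decide⟩

def p23_9 : Equiv.Perm (Fin 2 ⊕ Fin 3) :=
  ⟨Sum.elim ![Sum.inr 1, Sum.inr 2] ![Sum.inl 0, Sum.inl 1, Sum.inr 0],
   Sum.elim ![Sum.inr 0, Sum.inr 1] ![Sum.inr 2, Sum.inl 0, Sum.inl 1], by decide, by decide⟩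

def e23 : Fin 10 → Equiv.Perm (Fin 2 ⊕ Fin 3) :=
  ![p23_0, p23_1, p23_2, p23_3, p23_4, p23_5, p23_6, p23_7, p23_8, p23_9]

lemma wedge23_apply (f : Form V 2) (g : Form V 3) (v : Fin 5 → V) :
    wedge f g v = (f ![v 0, v 1] * g ![v 2, v 3, v 4]) +
      (-(f ![v 0, v 2] * g ![v 1, v 3, v 4])) +
      (f ![v 0, v 3] * g ![v 1, v 2, v 4]) +
      (-(f ![v 0, v 4] * g ![v 1, v 2, v 3])) +
      (f ![v 1, v 2] * g ![v 0, v 3, v 4]) +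
      (-(f ![v 1, v 3] * g ![v 0, v 2, v 4])) +
      (f ![v 1, v 4] * g ![v 0, v 2, v 3]) +
      (f ![v 2, v 3] * g ![v 0, v 1, v 4]) +
      (-(f ![v 2, v 4] * g ![v 0, v 1, v 3])) +
      (f ![v 3, v 4] * g ![v 0, v 1, v 2]) := by
  rw [wedge_eq_sum, sum_msc e23 (by decide) (by norm_num [Nat.factorial])]
  simp only [Fin.sum_univ_succ, Fin.sum_univ_zero, e23, Matrix.cons_val_zero,
    Matrix.cons_val_succ, Matrix.cons_val_one, Matrix.head_cons, Matrix.cons_val_fin_one]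
  rw [lid_summand_pos f g p23_0 _ (by decide),
    lid_summand_neg f g p23_1 _ (by decide),
    lid_summand_pos f g p23_2 _ (by decide),
    lid_summand_neg f g p23_3 _ (by decide),
    lid_summand_pos f g p23_4 _ (by decide),
    lid_summand_neg f g p23_5 _ (by decide),
    lid_summand_pos f g p23_6 _ (by decide),
    lid_summand_pos f g p23_7 _ (by decide),
    lid_summand_neg f g p23_8 _ (by decide),
    lid_summand_pos f g p23_9 _ (by decide)]
  have tA0 : (fun i => (v ∘ finSumFinEquiv) (p23_0 (Sum.inl i))) = ![v 0, v 1] := by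
    funext i; fin_cases i <;> rfl
  have tB0 : (fun i => (v ∘ finSumFinEquiv) (p23_0 (Sum.inr i))) = ![v 2, v 3, v 4] := by
    funext i; fin_cases i <;> rfl
  have tA1 : (fun i => (v ∘ finSumFinEquiv) (p23_1 (Sum.inl i))) = ![v 0, v 2] := by
    funext i; fin_cases i <;> rfl
  have tB1 : (fun i => (v ∘ finSumFinEquiv) (p23_1 (Sum.inr i))) = ![v 1, v 3, v 4] := by
    funext i; fin_cases i <;> rfl
  have tA2 : (fun i => (v ∘ finSumFinEquiv) (p23_2 (Sum.inl i))) = ![v 0, v 3] := by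
    funext i; fin_cases i <;> rfl
  have tB2 : (fun i => (v ∘ finSumFinEquiv) (p23_2 (Sum.inr i))) = ![v 1, v 2, v 4] := by
    funext i; fin_cases i <;> rfl
  have tA3 : (fun i => (v ∘ finSumFinEquiv) (p23_3 (Sum.inl i))) = ![v 0, v 4] := by
    funext i; fin_cases i <;> rfl
  have tB3 : (fun i => (v ∘ finSumFinEquiv) (p23_3 (Sum.inr i))) = ![v 1, v 2, v 3] := by
    funext i; fin_cases i <;> rfl
  have tA4 : (fun i => (v ∘ finSumFinEquiv) (p23_4 (Sum.inl i))) = ![v 1, v 2] := by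
    funext i; fin_cases i <;> rfl
  have tB4 : (fun i => (v ∘ finSumFinEquiv) (p23_4 (Sum.inr i))) = ![v 0, v 3, v 4] := by
    funext i; fin_cases i <;> rfl
  have tA5 : (fun i => (v ∘ finSumFinEquiv) (p23_5 (Sum.inl i))) = ![v 1, v 3] := by
    funext i; fin_cases i <;> rfl
  have tB5 : (fun i => (v ∘ finSumFinEquiv) (p23_5 (Sum.inr i))) = ![v 0, v 2, v 4] := by
    funext i; fin_cases i <;> rfl
  have tA6 : (fun i => (v ∘ finSumFinEquiv) (p23_6 (Sum.inl i))) = ![v 1, v 4] := by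
    funext i; fin_cases i <;> rfl
  have tB6 : (fun i => (v ∘ finSumFinEquiv) (p23_6 (Sum.inr i))) = ![v 0, v 2, v 3] := by
    funext i; fin_cases i <;> rfl
  have tA7 : (fun i => (v ∘ finSumFinEquiv) (p23_7 (Sum.inl i))) = ![v 2, v 3] := by
    funext i; fin_cases i <;> rfl
  have tB7 : (fun i => (v ∘ finSumFinEquiv) (p23_7 (Sum.inr i))) = ![v 0, v 1, v 4] := by
    funext i; fin_cases i <;> rfl
  have tA8 : (fun i => (v ∘ finSumFinEquiv) (p23_8 (Sum.inl i))) = ![v 2, v 4] := by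
    funext i; fin_cases i <;> rfl
  have tB8 : (fun i => (v ∘ finSumFinEquiv) (p23_8 (Sum.inr i))) = ![v 0, v 1, v 3] := by
    funext i; fin_cases i <;> rfl
  have tA9 : (fun i => (v ∘ finSumFinEquiv) (p23_9 (Sum.inl i))) = ![v 3, v 4] := by
    funext i; fin_cases i <;> rfl
  have tB9 : (fun i => (v ∘ finSumFinEquiv) (p23_9 (Sum.inr i))) = ![v 0, v 1, v 2] := by
    funext i; fin_cases i <;> rfl
  rw [tA0, tB0, tA1, tB1, tA2, tB2, tA3, tB3, tA4, tB4, tA5, tB5, tA6, tB6, tA7, tB7, tA8, tB8, tA9, tB9]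
  ring

def p42_0 : Equiv.Perm (Fin 4 ⊕ Fin 2) :=
  ⟨Sum.elim ![Sum.inl 0, Sum.inl 1, Sum.inl 2, Sum.inl 3] ![Sum.inr 0, Sum.inr 1],
   Sum.elim ![Sum.inl 0, Sum.inl 1, Sum.inl 2, Sum.inl 3] ![Sum.inr 0, Sum.inr 1], by decide, by decide⟩

def p42_1 : Equiv.Perm (Fin 4 ⊕ Fin 2) :=
  ⟨Sum.elim ![Sum.inl 0, Sum.inl 1, Sum.inl 2, Sum.inr 0] ![Sum.inl 3, Sum.inr 1],
   Sum.elim ![Sum.inl 0, Sum.inl 1, Sum.inl 2, Sum.inr 0] ![Sum.inl 3, Sum.inr 1], by decide, by decide⟩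

def p42_2 : Equiv.Perm (Fin 4 ⊕ Fin 2) :=
  ⟨Sum.elim ![Sum.inl 0, Sum.inl 1, Sum.inl 2, Sum.inr 1] ![Sum.inl 3, Sum.inr 0],
   Sum.elim ![Sum.inl 0, Sum.inl 1, Sum.inl 2, Sum.inr 0] ![Sum.inr 1, Sum.inl 3], by decide, by decide⟩

def p42_3 : Equiv.Perm (Fin 4 ⊕ Fin 2) :=
  ⟨Sum.elim ![Sum.inl 0, Sum.inl 1, Sum.inl 3, Sum.inr 0] ![Sum.inl 2, Sum.inr 1],
   Sum.elim ![Sum.inl 0, Sum.inl 1, Sum.inr 0, Sum.inl 2] ![Sum.inl 3, Sum.inr 1], by decide, by decide⟩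

def p42_4 : Equiv.Perm (Fin 4 ⊕ Fin 2) :=
  ⟨Sum.elim ![Sum.inl 0, Sum.inl 1, Sum.inl 3, Sum.inr 1] ![Sum.inl 2, Sum.inr 0],
   Sum.elim ![Sum.inl 0, Sum.inl 1, Sum.inr 0, Sum.inl 2] ![Sum.inr 1, Sum.inl 3], by decide, by decide⟩

def p42_5 : Equiv.Perm (Fin 4 ⊕ Fin 2) :=
  ⟨Sum.elim ![Sum.inl 0, Sum.inl 1, Sum.inr 0, Sum.inr 1] ![Sum.inl 2, Sum.inl 3],
   Sum.elim ![Sum.inl 0, Sum.inl 1, Sum.inr 0, Sum.inr 1] ![Sum.inl 2, Sum.inl 3], by decide, by decide⟩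

def p42_6 : Equiv.Perm (Fin 4 ⊕ Fin 2) :=
  ⟨Sum.elim ![Sum.inl 0, Sum.inl 2, Sum.inl 3, Sum.inr 0] ![Sum.inl 1, Sum.inr 1],
   Sum.elim ![Sum.inl 0, Sum.inr 0, Sum.inl 1, Sum.inl 2] ![Sum.inl 3, Sum.inr 1], by decide, by decide⟩

def p42_7 : Equiv.Perm (Fin 4 ⊕ Fin 2) :=
  ⟨Sum.elim ![Sum.inl 0, Sum.inl 2, Sum.inl 3, Sum.inr 1] ![Sum.inl 1, Sum.inr 0],
   Sum.elim ![Sum.inl 0, Sum.inr 0, Sum.inl 1, Sum.inl 2] ![Sum.inr 1, Sum.inl 3], by decide, by decide⟩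

def p42_8 : Equiv.Perm (Fin 4 ⊕ Fin 2) :=
  ⟨Sum.elim ![Sum.inl 0, Sum.inl 2, Sum.inr 0, Sum.inr 1] ![Sum.inl 1, Sum.inl 3],
   Sum.elim ![Sum.inl 0, Sum.inr 0, Sum.inl 1, Sum.inr 1] ![Sum.inl 2, Sum.inl 3], by decide, by decide⟩

def p42_9 : Equiv.Perm (Fin 4 ⊕ Fin 2) :=
  ⟨Sum.elim ![Sum.inl 0, Sum.inl 3, Sum.inr 0, Sum.inr 1] ![Sum.inl 1, Sum.inl 2],
   Sum.elim ![Sum.inl 0, Sum.inr 0, Sum.inr 1, Sum.inl 1] ![Sum.inl 2, Sum.inl 3], by decide, by decide⟩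

def p42_10 : Equiv.Perm (Fin 4 ⊕ Fin 2) :=
  ⟨Sum.elim ![Sum.inl 1, Sum.inl 2, Sum.inl 3, Sum.inr 0] ![Sum.inl 0, Sum.inr 1],
   Sum.elim ![Sum.inr 0, Sum.inl 0, Sum.inl 1, Sum.inl 2] ![Sum.inl 3, Sum.inr 1], by decide, by decide⟩

def p42_11 : Equiv.Perm (Fin 4 ⊕ Fin 2) :=
  ⟨Sum.elim ![Sum.inl 1, Sum.inl 2, Sum.inl 3, Sum.inr 1] ![Sum.inl 0, Sum.inr 0],
   Sum.elim ![Sum.inr 0, Sum.inl 0, Sum.inl 1, Sum.inl 2] ![Sum.inr 1, Sum.inl 3], by decide, by decide⟩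

def p42_12 : Equiv.Perm (Fin 4 ⊕ Fin 2) :=
  ⟨Sum.elim ![Sum.inl 1, Sum.inl 2, Sum.inr 0, Sum.inr 1] ![Sum.inl 0, Sum.inl 3],
   Sum.elim ![Sum.inr 0, Sum.inl 0, Sum.inl 1, Sum.inr 1] ![Sum.inl 2, Sum.inl 3], by decide, by decide⟩

def p42_13 : Equiv.Perm (Fin 4 ⊕ Fin 2) :=
  ⟨Sum.elim ![Sum.inl 1, Sum.inl 3, Sum.inr 0, Sum.inr 1] ![Sum.inl 0, Sum.inl 2],
   Sum.elim ![Sum.inr 0, Sum.inl 0, Sum.inr 1, Sum.inl 1] ![Sum.inl 2, Sum.inl 3], by decide, by decide⟩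

def p42_14 : Equiv.Perm (Fin 4 ⊕ Fin 2) :=
  ⟨Sum.elim ![Sum.inl 2, Sum.inl 3, Sum.inr 0, Sum.inr 1] ![Sum.inl 0, Sum.inl 1],
   Sum.elim ![Sum.inr 0, Sum.inr 1, Sum.inl 0, Sum.inl 1] ![Sum.inl 2, Sum.inl 3], by decide, by decide⟩

def e42 : Fin 15 → Equiv.Perm (Fin 4 ⊕ Fin 2) :=
  ![p42_0, p42_1, p42_2, p42_3, p42_4, p42_5, p42_6, p42_7, p42_8, p42_9, p42_10, p42_11, p42_12, p42_13, p42_14]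

lemma wedge42_apply (f : Form V 4) (g : Form V 2) (v : Fin 6 → V) :
    wedge f g v = (f ![v 0, v 1, v 2, v 3] * g ![v 4, v 5]) +
      (-(f ![v 0, v 1, v 2, v 4] * g ![v 3, v 5])) +
      (f ![v 0, v 1, v 2, v 5] * g ![v 3, v 4]) +
      (f ![v 0, v 1, v 3, v 4] * g ![v 2, v 5]) +
      (-(f ![v 0, v 1, v 3, v 5] * g ![v 2, v 4])) +
      (f ![v 0, v 1, v 4, v 5] * g ![v 2, v 3]) +
      (-(f ![v 0, v 2, v 3, v 4] * g ![v 1, v 5])) +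
      (f ![v 0, v 2, v 3, v 5] * g ![v 1, v 4]) +
      (-(f ![v 0, v 2, v 4, v 5] * g ![v 1, v 3])) +
      (f ![v 0, v 3, v 4, v 5] * g ![v 1, v 2]) +
      (f ![v 1, v 2, v 3, v 4] * g ![v 0, v 5]) +
      (-(f ![v 1, v 2, v 3, v 5] * g ![v 0, v 4])) +
      (f ![v 1, v 2, v 4, v 5] * g ![v 0, v 3]) +
      (-(f ![v 1, v 3, v 4, v 5] * g ![v 0, v 2])) +
      (f ![v 2, v 3, v 4, v 5] * g ![v 0, v 1]) := by
  rw [wedge_eq_sum, sum_msc e42 (by decide) (by norm_num [Nat.factorial])]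
  simp only [Fin.sum_univ_succ, Fin.sum_univ_zero, e42, Matrix.cons_val_zero,
    Matrix.cons_val_succ, Matrix.cons_val_one, Matrix.head_cons, Matrix.cons_val_fin_one]
  rw [lid_summand_pos f g p42_0 _ (by decide),
    lid_summand_neg f g p42_1 _ (by decide),
    lid_summand_pos f g p42_2 _ (by decide),
    lid_summand_pos f g p42_3 _ (by decide),
    lid_summand_neg f g p42_4 _ (by decide),
    lid_summand_pos f g p42_5 _ (by decide),
    lid_summand_neg f g p42_6 _ (by decide),
    lid_summand_pos f g p42_7 _ (by decide),
    lid_summand_neg f g p42_8 _ (by decide),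
    lid_summand_pos f g p42_9 _ (by decide),
    lid_summand_pos f g p42_10 _ (by decide),
    lid_summand_neg f g p42_11 _ (by decide),
    lid_summand_pos f g p42_12 _ (by decide),
    lid_summand_neg f g p42_13 _ (by decide),
    lid_summand_pos f g p42_14 _ (by decide)]
  have tA0 : (fun i => (v ∘ finSumFinEquiv) (p42_0 (Sum.inl i))) = ![v 0, v 1, v 2, v 3] := by
    funext i; fin_cases i <;> rfl
  have tB0 : (fun i => (v ∘ finSumFinEquiv) (p42_0 (Sum.inr i))) = ![v 4, v 5] := by
    funext i; fin_cases i <;> rfl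
  have tA1 : (fun i => (v ∘ finSumFinEquiv) (p42_1 (Sum.inl i))) = ![v 0, v 1, v 2, v 4] := by
    funext i; fin_cases i <;> rfl
  have tB1 : (fun i => (v ∘ finSumFinEquiv) (p42_1 (Sum.inr i))) = ![v 3, v 5] := by
    funext i; fin_cases i <;> rfl
  have tA2 : (fun i => (v ∘ finSumFinEquiv) (p42_2 (Sum.inl i))) = ![v 0, v 1, v 2, v 5] := by
    funext i; fin_cases i <;> rfl
  have tB2 : (fun i => (v ∘ finSumFinEquiv) (p42_2 (Sum.inr i))) = ![v 3, v 4] := by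
    funext i; fin_cases i <;> rfl
  have tA3 : (fun i => (v ∘ finSumFinEquiv) (p42_3 (Sum.inl i))) = ![v 0, v 1, v 3, v 4] := by
    funext i; fin_cases i <;> rfl
  have tB3 : (fun i => (v ∘ finSumFinEquiv) (p42_3 (Sum.inr i))) = ![v 2, v 5] := by
    funext i; fin_cases i <;> rfl
  have tA4 : (fun i => (v ∘ finSumFinEquiv) (p42_4 (Sum.inl i))) = ![v 0, v 1, v 3, v 5] := by
    funext i; fin_cases i <;> rfl
  have tB4 : (fun i => (v ∘ finSumFinEquiv) (p42_4 (Sum.inr i))) = ![v 2, v 4] := by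
    funext i; fin_cases i <;> rfl
  have tA5 : (fun i => (v ∘ finSumFinEquiv) (p42_5 (Sum.inl i))) = ![v 0, v 1, v 4, v 5] := by
    funext i; fin_cases i <;> rfl
  have tB5 : (fun i => (v ∘ finSumFinEquiv) (p42_5 (Sum.inr i))) = ![v 2, v 3] := by
    funext i; fin_cases i <;> rfl
  have tA6 : (fun i => (v ∘ finSumFinEquiv) (p42_6 (Sum.inl i))) = ![v 0, v 2, v 3, v 4] := by
    funext i; fin_cases i <;> rfl
  have tB6 : (fun i => (v ∘ finSumFinEquiv) (p42_6 (Sum.inr i))) = ![v 1, v 5] := by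
    funext i; fin_cases i <;> rfl
  have tA7 : (fun i => (v ∘ finSumFinEquiv) (p42_7 (Sum.inl i))) = ![v 0, v 2, v 3, v 5] := by
    funext i; fin_cases i <;> rfl
  have tB7 : (fun i => (v ∘ finSumFinEquiv) (p42_7 (Sum.inr i))) = ![v 1, v 4] := by
    funext i; fin_cases i <;> rfl
  have tA8 : (fun i => (v ∘ finSumFinEquiv) (p42_8 (Sum.inl i))) = ![v 0, v 2, v 4, v 5] := by
    funext i; fin_cases i <;> rfl
  have tB8 : (fun i => (v ∘ finSumFinEquiv) (p42_8 (Sum.inr i))) = ![v 1, v 3] := by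
    funext i; fin_cases i <;> rfl
  have tA9 : (fun i => (v ∘ finSumFinEquiv) (p42_9 (Sum.inl i))) = ![v 0, v 3, v 4, v 5] := by
    funext i; fin_cases i <;> rfl
  have tB9 : (fun i => (v ∘ finSumFinEquiv) (p42_9 (Sum.inr i))) = ![v 1, v 2] := by
    funext i; fin_cases i <;> rfl
  have tA10 : (fun i => (v ∘ finSumFinEquiv) (p42_10 (Sum.inl i))) = ![v 1, v 2, v 3, v 4] := by
    funext i; fin_cases i <;> rfl
  have tB10 : (fun i => (v ∘ finSumFinEquiv) (p42_10 (Sum.inr i))) = ![v 0, v 5] := by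
    funext i; fin_cases i <;> rfl
  have tA11 : (fun i => (v ∘ finSumFinEquiv) (p42_11 (Sum.inl i))) = ![v 1, v 2, v 3, v 5] := by
    funext i; fin_cases i <;> rfl
  have tB11 : (fun i => (v ∘ finSumFinEquiv) (p42_11 (Sum.inr i))) = ![v 0, v 4] := by
    funext i; fin_cases i <;> rfl
  have tA12 : (fun i => (v ∘ finSumFinEquiv) (p42_12 (Sum.inl i))) = ![v 1, v 2, v 4, v 5] := by
    funext i; fin_cases i <;> rfl
  have tB12 : (fun i => (v ∘ finSumFinEquiv) (p42_12 (Sum.inr i))) = ![v 0, v 3] := by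
    funext i; fin_cases i <;> rfl
  have tA13 : (fun i => (v ∘ finSumFinEquiv) (p42_13 (Sum.inl i))) = ![v 1, v 3, v 4, v 5] := by
    funext i; fin_cases i <;> rfl
  have tB13 : (fun i => (v ∘ finSumFinEquiv) (p42_13 (Sum.inr i))) = ![v 0, v 2] := by
    funext i; fin_cases i <;> rfl
  have tA14 : (fun i => (v ∘ finSumFinEquiv) (p42_14 (Sum.inl i))) = ![v 2, v 3, v 4, v 5] := by
    funext i; fin_cases i <;> rfl
  have tB14 : (fun i => (v ∘ finSumFinEquiv) (p42_14 (Sum.inr i))) = ![v 0, v 1] := by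
    funext i; fin_cases i <;> rfl
  rw [tA0, tB0, tA1, tB1, tA2, tB2, tA3, tB3, tA4, tB4, tA5, tB5, tA6, tB6, tA7, tB7, tA8, tB8, tA9, tB9, tA10, tB10, tA11, tB11, tA12, tB12, tA13, tB13, tA14, tB14]
  ring

def p33_0 : Equiv.Perm (Fin 3 ⊕ Fin 3) :=
  ⟨Sum.elim ![Sum.inl 0, Sum.inl 1, Sum.inl 2] ![Sum.inr 0, Sum.inr 1, Sum.inr 2],
   Sum.elim ![Sum.inl 0, Sum.inl 1, Sum.inl 2] ![Sum.inr 0, Sum.inr 1, Sum.inr 2], by decide, by decide⟩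

def p33_1 : Equiv.Perm (Fin 3 ⊕ Fin 3) :=
  ⟨Sum.elim ![Sum.inl 0, Sum.inl 1, Sum.inr 0] ![Sum.inl 2, Sum.inr 1, Sum.inr 2],
   Sum.elim ![Sum.inl 0, Sum.inl 1, Sum.inr 0] ![Sum.inl 2, Sum.inr 1, Sum.inr 2], by decide, by decide⟩

def p33_2 : Equiv.Perm (Fin 3 ⊕ Fin 3) :=
  ⟨Sum.elim ![Sum.inl 0, Sum.inl 1, Sum.inr 1] ![Sum.inl 2, Sum.inr 0, Sum.inr 2],
   Sum.elim ![Sum.inl 0, Sum.inl 1, Sum.inr 0] ![Sum.inr 1, Sum.inl 2, Sum.inr 2], by decide, by decide⟩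

def p33_3 : Equiv.Perm (Fin 3 ⊕ Fin 3) :=
  ⟨Sum.elim ![Sum.inl 0, Sum.inl 1, Sum.inr 2] ![Sum.inl 2, Sum.inr 0, Sum.inr 1],
   Sum.elim ![Sum.inl 0, Sum.inl 1, Sum.inr 0] ![Sum.inr 1, Sum.inr 2, Sum.inl 2], by decide, by decide⟩

def p33_4 : Equiv.Perm (Fin 3 ⊕ Fin 3) :=
  ⟨Sum.elim ![Sum.inl 0, Sum.inl 2, Sum.inr 0] ![Sum.inl 1, Sum.inr 1, Sum.inr 2],
   Sum.elim ![Sum.inl 0, Sum.inr 0, Sum.inl 1] ![Sum.inl 2, Sum.inr 1, Sum.inr 2], by decide, by decide⟩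

def p33_5 : Equiv.Perm (Fin 3 ⊕ Fin 3) :=
  ⟨Sum.elim ![Sum.inl 0, Sum.inl 2, Sum.inr 1] ![Sum.inl 1, Sum.inr 0, Sum.inr 2],
   Sum.elim ![Sum.inl 0, Sum.inr 0, Sum.inl 1] ![Sum.inr 1, Sum.inl 2, Sum.inr 2], by decide, by decide⟩

def p33_6 : Equiv.Perm (Fin 3 ⊕ Fin 3) :=
  ⟨Sum.elim ![Sum.inl 0, Sum.inl 2, Sum.inr 2] ![Sum.inl 1, Sum.inr 0, Sum.inr 1],
   Sum.elim ![Sum.inl 0, Sum.inr 0, Sum.inl 1] ![Sum.inr 1, Sum.inr 2, Sum.inl 2], by decide, by decide⟩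

def p33_7 : Equiv.Perm (Fin 3 ⊕ Fin 3) :=
  ⟨Sum.elim ![Sum.inl 0, Sum.inr 0, Sum.inr 1] ![Sum.inl 1, Sum.inl 2, Sum.inr 2],
   Sum.elim ![Sum.inl 0, Sum.inr 0, Sum.inr 1] ![Sum.inl 1, Sum.inl 2, Sum.inr 2], by decide, by decide⟩

def p33_8 : Equiv.Perm (Fin 3 ⊕ Fin 3) :=
  ⟨Sum.elim ![Sum.inl 0, Sum.inr 0, Sum.inr 2] ![Sum.inl 1, Sum.inl 2, Sum.inr 1],
   Sum.elim ![Sum.inl 0, Sum.inr 0, Sum.inr 1] ![Sum.inl 1, Sum.inr 2, Sum.inl 2], by decide, by decide⟩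

def p33_9 : Equiv.Perm (Fin 3 ⊕ Fin 3) :=
  ⟨Sum.elim ![Sum.inl 0, Sum.inr 1, Sum.inr 2] ![Sum.inl 1, Sum.inl 2, Sum.inr 0],
   Sum.elim ![Sum.inl 0, Sum.inr 0, Sum.inr 1] ![Sum.inr 2, Sum.inl 1, Sum.inl 2], by decide, by decide⟩

def p33_10 : Equiv.Perm (Fin 3 ⊕ Fin 3) :=
  ⟨Sum.elim ![Sum.inl 1, Sum.inl 2, Sum.inr 0] ![Sum.inl 0, Sum.inr 1, Sum.inr 2],
   Sum.elim ![Sum.inr 0, Sum.inl 0, Sum.inl 1] ![Sum.inl 2, Sum.inr 1, Sum.inr 2], by decide, by decide⟩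

def p33_11 : Equiv.Perm (Fin 3 ⊕ Fin 3) :=
  ⟨Sum.elim ![Sum.inl 1, Sum.inl 2, Sum.inr 1] ![Sum.inl 0, Sum.inr 0, Sum.inr 2],
   Sum.elim ![Sum.inr 0, Sum.inl 0, Sum.inl 1] ![Sum.inr 1, Sum.inl 2, Sum.inr 2], by decide, by decide⟩

def p33_12 : Equiv.Perm (Fin 3 ⊕ Fin 3) :=
  ⟨Sum.elim ![Sum.inl 1, Sum.inl 2, Sum.inr 2] ![Sum.inl 0, Sum.inr 0, Sum.inr 1],
   Sum.elim ![Sum.inr 0, Sum.inl 0, Sum.inl 1] ![Sum.inr 1, Sum.inr 2, Sum.inl 2], by decide, by decide⟩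

def p33_13 : Equiv.Perm (Fin 3 ⊕ Fin 3) :=
  ⟨Sum.elim ![Sum.inl 1, Sum.inr 0, Sum.inr 1] ![Sum.inl 0, Sum.inl 2, Sum.inr 2],
   Sum.elim ![Sum.inr 0, Sum.inl 0, Sum.inr 1] ![Sum.inl 1, Sum.inl 2, Sum.inr 2], by decide, by decide⟩

def p33_14 : Equiv.Perm (Fin 3 ⊕ Fin 3) :=
  ⟨Sum.elim ![Sum.inl 1, Sum.inr 0, Sum.inr 2] ![Sum.inl 0, Sum.inl 2, Sum.inr 1],
   Sum.elim ![Sum.inr 0, Sum.inl 0, Sum.inr 1] ![Sum.inl 1, Sum.inr 2, Sum.inl 2], by decide, by decide⟩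

def p33_15 : Equiv.Perm (Fin 3 ⊕ Fin 3) :=
  ⟨Sum.elim ![Sum.inl 1, Sum.inr 1, Sum.inr 2] ![Sum.inl 0, Sum.inl 2, Sum.inr 0],
   Sum.elim ![Sum.inr 0, Sum.inl 0, Sum.inr 1] ![Sum.inr 2, Sum.inl 1, Sum.inl 2], by decide, by decide⟩

def p33_16 : Equiv.Perm (Fin 3 ⊕ Fin 3) :=
  ⟨Sum.elim ![Sum.inl 2, Sum.inr 0, Sum.inr 1] ![Sum.inl 0, Sum.inl 1, Sum.inr 2],
   Sum.elim ![Sum.inr 0, Sum.inr 1, Sum.inl 0] ![Sum.inl 1, Sum.inl 2, Sum.inr 2], by decide, by decide⟩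

def p33_17 : Equiv.Perm (Fin 3 ⊕ Fin 3) :=
  ⟨Sum.elim ![Sum.inl 2, Sum.inr 0, Sum.inr 2] ![Sum.inl 0, Sum.inl 1, Sum.inr 1],
   Sum.elim ![Sum.inr 0, Sum.inr 1, Sum.inl 0] ![Sum.inl 1, Sum.inr 2, Sum.inl 2], by decide, by decide⟩

def p33_18 : Equiv.Perm (Fin 3 ⊕ Fin 3) :=
  ⟨Sum.elim ![Sum.inl 2, Sum.inr 1, Sum.inr 2] ![Sum.inl 0, Sum.inl 1, Sum.inr 0],
   Sum.elim ![Sum.inr 0, Sum.inr 1, Sum.inl 0] ![Sum.inr 2, Sum.inl 1, Sum.inl 2], by decide, by decide⟩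

def p33_19 : Equiv.Perm (Fin 3 ⊕ Fin 3) :=
  ⟨Sum.elim ![Sum.inr 0, Sum.inr 1, Sum.inr 2] ![Sum.inl 0, Sum.inl 1, Sum.inl 2],
   Sum.elim ![Sum.inr 0, Sum.inr 1, Sum.inr 2] ![Sum.inl 0, Sum.inl 1, Sum.inl 2], by decide, by decide⟩

def e33 : Fin 20 → Equiv.Perm (Fin 3 ⊕ Fin 3) :=
  ![p33_0, p33_1, p33_2, p33_3, p33_4, p33_5, p33_6, p33_7, p33_8, p33_9, p33_10, p33_11, p33_12, p33_13, p33_14, p33_15, p33_16, p33_17, p33_18, p33_19]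

lemma wedge33_apply (f : Form V 3) (g : Form V 3) (v : Fin 6 → V) :
    wedge f g v = (f ![v 0, v 1, v 2] * g ![v 3, v 4, v 5]) +
      (-(f ![v 0, v 1, v 3] * g ![v 2, v 4, v 5])) +
      (f ![v 0, v 1, v 4] * g ![v 2, v 3, v 5]) +
      (-(f ![v 0, v 1, v 5] * g ![v 2, v 3, v 4])) +
      (f ![v 0, v 2, v 3] * g ![v 1, v 4, v 5]) +
      (-(f ![v 0, v 2, v 4] * g ![v 1, v 3, v 5])) +
      (f ![v 0, v 2, v 5] * g ![v 1, v 3, v 4]) +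
      (f ![v 0, v 3, v 4] * g ![v 1, v 2, v 5]) +
      (-(f ![v 0, v 3, v 5] * g ![v 1, v 2, v 4])) +
      (f ![v 0, v 4, v 5] * g ![v 1, v 2, v 3]) +
      (-(f ![v 1, v 2, v 3] * g ![v 0, v 4, v 5])) +
      (f ![v 1, v 2, v 4] * g ![v 0, v 3, v 5]) +
      (-(f ![v 1, v 2, v 5] * g ![v 0, v 3, v 4])) +
      (-(f ![v 1, v 3, v 4] * g ![v 0, v 2, v 5])) +
      (f ![v 1, v 3, v 5] * g ![v 0, v 2, v 4]) +
      (-(f ![v 1, v 4, v 5] * g ![v 0, v 2, v 3])) +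
      (f ![v 2, v 3, v 4] * g ![v 0, v 1, v 5]) +
      (-(f ![v 2, v 3, v 5] * g ![v 0, v 1, v 4])) +
      (f ![v 2, v 4, v 5] * g ![v 0, v 1, v 3]) +
      (-(f ![v 3, v 4, v 5] * g ![v 0, v 1, v 2])) := by
  rw [wedge_eq_sum, sum_msc e33 (by decide) (by norm_num [Nat.factorial])]
  simp only [Fin.sum_univ_succ, Fin.sum_univ_zero, e33, Matrix.cons_val_zero,
    Matrix.cons_val_succ, Matrix.cons_val_one, Matrix.head_cons, Matrix.cons_val_fin_one]
  rw [lid_summand_pos f g p33_0 _ (by decide),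
    lid_summand_neg f g p33_1 _ (by decide),
    lid_summand_pos f g p33_2 _ (by decide),
    lid_summand_neg f g p33_3 _ (by decide),
    lid_summand_pos f g p33_4 _ (by decide),
    lid_summand_neg f g p33_5 _ (by decide),
    lid_summand_pos f g p33_6 _ (by decide),
    lid_summand_pos f g p33_7 _ (by decide),
    lid_summand_neg f g p33_8 _ (by decide),
    lid_summand_pos f g p33_9 _ (by decide),
    lid_summand_neg f g p33_10 _ (by decide),
    lid_summand_pos f g p33_11 _ (by decide),
    lid_summand_neg f g p33_12 _ (by decide),
    lid_summand_neg f g p33_13 _ (by decide),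
    lid_summand_pos f g p33_14 _ (by decide),
    lid_summand_neg f g p33_15 _ (by decide),
    lid_summand_pos f g p33_16 _ (by decide),
    lid_summand_neg f g p33_17 _ (by decide),
    lid_summand_pos f g p33_18 _ (by decide),
    lid_summand_neg f g p33_19 _ (by decide)]
  have tA0 : (fun i => (v ∘ finSumFinEquiv) (p33_0 (Sum.inl i))) = ![v 0, v 1, v 2] := by
    funext i; fin_cases i <;> rfl
  have tB0 : (fun i => (v ∘ finSumFinEquiv) (p33_0 (Sum.inr i))) = ![v 3, v 4, v 5] := by
    funext i; fin_cases i <;> rfl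
  have tA1 : (fun i => (v ∘ finSumFinEquiv) (p33_1 (Sum.inl i))) = ![v 0, v 1, v 3] := by
    funext i; fin_cases i <;> rfl
  have tB1 : (fun i => (v ∘ finSumFinEquiv) (p33_1 (Sum.inr i))) = ![v 2, v 4, v 5] := by
    funext i; fin_cases i <;> rfl
  have tA2 : (fun i => (v ∘ finSumFinEquiv) (p33_2 (Sum.inl i))) = ![v 0, v 1, v 4] := by
    funext i; fin_cases i <;> rfl
  have tB2 : (fun i => (v ∘ finSumFinEquiv) (p33_2 (Sum.inr i))) = ![v 2, v 3, v 5] := by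
    funext i; fin_cases i <;> rfl
  have tA3 : (fun i => (v ∘ finSumFinEquiv) (p33_3 (Sum.inl i))) = ![v 0, v 1, v 5] := by
    funext i; fin_cases i <;> rfl
  have tB3 : (fun i => (v ∘ finSumFinEquiv) (p33_3 (Sum.inr i))) = ![v 2, v 3, v 4] := by
    funext i; fin_cases i <;> rfl
  have tA4 : (fun i => (v ∘ finSumFinEquiv) (p33_4 (Sum.inl i))) = ![v 0, v 2, v 3] := by
    funext i; fin_cases i <;> rfl
  have tB4 : (fun i => (v ∘ finSumFinEquiv) (p33_4 (Sum.inr i))) = ![v 1, v 4, v 5] := by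
    funext i; fin_cases i <;> rfl
  have tA5 : (fun i => (v ∘ finSumFinEquiv) (p33_5 (Sum.inl i))) = ![v 0, v 2, v 4] := by
    funext i; fin_cases i <;> rfl
  have tB5 : (fun i => (v ∘ finSumFinEquiv) (p33_5 (Sum.inr i))) = ![v 1, v 3, v 5] := by
    funext i; fin_cases i <;> rfl
  have tA6 : (fun i => (v ∘ finSumFinEquiv) (p33_6 (Sum.inl i))) = ![v 0, v 2, v 5] := by
    funext i; fin_cases i <;> rfl
  have tB6 : (fun i => (v ∘ finSumFinEquiv) (p33_6 (Sum.inr i))) = ![v 1, v 3, v 4] := by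
    funext i; fin_cases i <;> rfl
  have tA7 : (fun i => (v ∘ finSumFinEquiv) (p33_7 (Sum.inl i))) = ![v 0, v 3, v 4] := by
    funext i; fin_cases i <;> rfl
  have tB7 : (fun i => (v ∘ finSumFinEquiv) (p33_7 (Sum.inr i))) = ![v 1, v 2, v 5] := by
    funext i; fin_cases i <;> rfl
  have tA8 : (fun i => (v ∘ finSumFinEquiv) (p33_8 (Sum.inl i))) = ![v 0, v 3, v 5] := by
    funext i; fin_cases i <;> rfl
  have tB8 : (fun i => (v ∘ finSumFinEquiv) (p33_8 (Sum.inr i))) = ![v 1, v 2, v 4] := by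
    funext i; fin_cases i <;> rfl
  have tA9 : (fun i => (v ∘ finSumFinEquiv) (p33_9 (Sum.inl i))) = ![v 0, v 4, v 5] := by
    funext i; fin_cases i <;> rfl
  have tB9 : (fun i => (v ∘ finSumFinEquiv) (p33_9 (Sum.inr i))) = ![v 1, v 2, v 3] := by
    funext i; fin_cases i <;> rfl
  have tA10 : (fun i => (v ∘ finSumFinEquiv) (p33_10 (Sum.inl i))) = ![v 1, v 2, v 3] := by
    funext i; fin_cases i <;> rfl
  have tB10 : (fun i => (v ∘ finSumFinEquiv) (p33_10 (Sum.inr i))) = ![v 0, v 4, v 5] := by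
    funext i; fin_cases i <;> rfl
  have tA11 : (fun i => (v ∘ finSumFinEquiv) (p33_11 (Sum.inl i))) = ![v 1, v 2, v 4] := by
    funext i; fin_cases i <;> rfl
  have tB11 : (fun i => (v ∘ finSumFinEquiv) (p33_11 (Sum.inr i))) = ![v 0, v 3, v 5] := by
    funext i; fin_cases i <;> rfl
  have tA12 : (fun i => (v ∘ finSumFinEquiv) (p33_12 (Sum.inl i))) = ![v 1, v 2, v 5] := by
    funext i; fin_cases i <;> rfl
  have tB12 : (fun i => (v ∘ finSumFinEquiv) (p33_12 (Sum.inr i))) = ![v 0, v 3, v 4] := by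
    funext i; fin_cases i <;> rfl
  have tA13 : (fun i => (v ∘ finSumFinEquiv) (p33_13 (Sum.inl i))) = ![v 1, v 3, v 4] := by
    funext i; fin_cases i <;> rfl
  have tB13 : (fun i => (v ∘ finSumFinEquiv) (p33_13 (Sum.inr i))) = ![v 0, v 2, v 5] := by
    funext i; fin_cases i <;> rfl
  have tA14 : (fun i => (v ∘ finSumFinEquiv) (p33_14 (Sum.inl i))) = ![v 1, v 3, v 5] := by
    funext i; fin_cases i <;> rfl
  have tB14 : (fun i => (v ∘ finSumFinEquiv) (p33_14 (Sum.inr i))) = ![v 0, v 2, v 4] := by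
    funext i; fin_cases i <;> rfl
  have tA15 : (fun i => (v ∘ finSumFinEquiv) (p33_15 (Sum.inl i))) = ![v 1, v 4, v 5] := by
    funext i; fin_cases i <;> rfl
  have tB15 : (fun i => (v ∘ finSumFinEquiv) (p33_15 (Sum.inr i))) = ![v 0, v 2, v 3] := by
    funext i; fin_cases i <;> rfl
  have tA16 : (fun i => (v ∘ finSumFinEquiv) (p33_16 (Sum.inl i))) = ![v 2, v 3, v 4] := by
    funext i; fin_cases i <;> rfl
  have tB16 : (fun i => (v ∘ finSumFinEquiv) (p33_16 (Sum.inr i))) = ![v 0, v 1, v 5] := by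
    funext i; fin_cases i <;> rfl
  have tA17 : (fun i => (v ∘ finSumFinEquiv) (p33_17 (Sum.inl i))) = ![v 2, v 3, v 5] := by
    funext i; fin_cases i <;> rfl
  have tB17 : (fun i => (v ∘ finSumFinEquiv) (p33_17 (Sum.inr i))) = ![v 0, v 1, v 4] := by
    funext i; fin_cases i <;> rfl
  have tA18 : (fun i => (v ∘ finSumFinEquiv) (p33_18 (Sum.inl i))) = ![v 2, v 4, v 5] := by
    funext i; fin_cases i <;> rfl
  have tB18 : (fun i => (v ∘ finSumFinEquiv) (p33_18 (Sum.inr i))) = ![v 0, v 1, v 3] := by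
    funext i; fin_cases i <;> rfl
  have tA19 : (fun i => (v ∘ finSumFinEquiv) (p33_19 (Sum.inl i))) = ![v 3, v 4, v 5] := by
    funext i; fin_cases i <;> rfl
  have tB19 : (fun i => (v ∘ finSumFinEquiv) (p33_19 (Sum.inr i))) = ![v 0, v 1, v 2] := by
    funext i; fin_cases i <;> rfl
  rw [tA0, tB0, tA1, tB1, tA2, tB2, tA3, tB3, tA4, tB4, tA5, tB5, tA6, tB6, tA7, tB7, tA8, tB8, tA9, tB9, tA10, tB10, tA11, tB11, tA12, tB12, tA13, tB13, tA14, tB14, tA15, tB15, tA16, tB16, tA17, tB17, tA18, tB18, tA19, tB19]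
  ring
end WedgeMachinery


section IwAux
open Equiv AlternatingMap
set_option maxHeartbeats 3200000
set_option synthInstance.maxHeartbeats 400000

lemma iwE_apply (i : Fin 6) (x : Iw) : iwE i ![x] = x i := rfl

lemma om0_apply (x y : Iw) : iwOm0 ![x, y] =
    x 0 * y 1 - x 1 * y 0 + (x 2 * y 3 - x 3 * y 2) + (x 4 * y 5 - x 5 * y 4) := by
  simp only [iwOm0, AlternatingMap.add_apply, iwE2, wedge11_apply, Matrix.cons_val_zero,
    Matrix.cons_val_one, Matrix.head_cons, iwE_apply]
  ring

lemma w2_apply (x y : Iw) : iwW2 ![x, y] =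
    -(4:ℝ)/3 * (x 0 * y 1 - x 1 * y 0) + (-(4:ℝ)/3) * (x 2 * y 3 - x 3 * y 2)
      + (8:ℝ)/3 * (x 4 * y 5 - x 5 * y 4) := by
  simp only [iwW2, AlternatingMap.add_apply, AlternatingMap.smul_apply, iwE2, wedge11_apply,
    Matrix.cons_val_zero, Matrix.cons_val_one, Matrix.head_cons, iwE_apply, smul_eq_mul]
  ring

lemma iwE3_apply (i j k : Fin 6) (x y z : Iw) : iwE3 i j k ![x, y, z] =
    (x i * y j - y i * x j) * z k - (x i * z j - z i * x j) * y k
      + (y i * z j - z i * y j) * x k := by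
  rw [iwE3, wedge21_apply]
  simp only [Matrix.cons_val_zero, Matrix.cons_val_one, Matrix.head_cons, Matrix.cons_val_two,
    Matrix.tail_cons, wedge11_apply, iwE_apply]
  ring

lemma psip_apply (x y z : Iw) : iwPsip0 ![x, y, z] =
    x 0 * y 2 * z 4 - x 0 * z 2 * y 4 - y 0 * x 2 * z 4 + y 0 * z 2 * x 4 + z 0 * x 2 * y 4 - z 0 * y 2 * x 4 - x 0 * y 3 * z 5 + x 0 * z 3 * y 5 + y 0 * x 3 * z 5 - y 0 * z 3 * x 5 - z 0 * x 3 * y 5 + z 0 * y 3 * x 5 - x 1 * y 2 * z 5 + x 1 * z 2 * y 5 + y 1 * x 2 * z 5 - y 1 * z 2 * x 5 - z 1 * x 2 * y 5 + z 1 * y 2 * x 5 - x 1 * y 3 * z 4 + x 1 * z 3 * y 4 + y 1 * x 3 * z 4 - y 1 * z 3 * x 4 - z 1 * x 3 * y 4 + z 1 * y 3 * x 4 := by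
  simp only [iwPsip0, AlternatingMap.sub_apply, iwE3_apply]
  ring

lemma psim_apply (x y z : Iw) : iwPsim0 ![x, y, z] =
    x 0 * y 2 * z 5 - x 0 * z 2 * y 5 - y 0 * x 2 * z 5 + y 0 * z 2 * x 5 + z 0 * x 2 * y 5 - z 0 * y 2 * x 5 + x 0 * y 3 * z 4 - x 0 * z 3 * y 4 - y 0 * x 3 * z 4 + y 0 * z 3 * x 4 + z 0 * x 3 * y 4 - z 0 * y 3 * x 4 + x 1 * y 2 * z 4 - x 1 * z 2 * y 4 - y 1 * x 2 * z 4 + y 1 * z 2 * x 4 + z 1 * x 2 * y 4 - z 1 * y 2 * x 4 - x 1 * y 3 * z 5 + x 1 * z 3 * y 5 + y 1 * x 3 * z 5 - y 1 * z 3 * x 5 - z 1 * x 3 * y 5 + z 1 * y 3 * x 5 := by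
  simp only [iwPsim0, AlternatingMap.sub_apply, AlternatingMap.add_apply, iwE3_apply]
  ring

lemma br4 (x y : Iw) : (⁅x, y⁆ : Iw) 4 = -(x 0 * y 3 - x 3 * y 0) - (x 1 * y 2 - x 2 * y 1) := rfl
lemma br5 (x y : Iw) : (⁅x, y⁆ : Iw) 5 = -(x 0 * y 2 - x 2 * y 0) + (x 1 * y 3 - x 3 * y 1) := rfl
lemma br0 (x y : Iw) : (⁅x, y⁆ : Iw) 0 = 0 := rfl
lemma br1 (x y : Iw) : (⁅x, y⁆ : Iw) 1 = 0 := rfl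
lemma br2 (x y : Iw) : (⁅x, y⁆ : Iw) 2 = 0 := rfl
lemma br3 (x y : Iw) : (⁅x, y⁆ : Iw) 3 = 0 := rfl

noncomputable def Jmap : Iw →ₗ[ℝ] Iw where
  toFun x := ![-x 1, x 0, -x 3, x 2, -x 5, x 4]
  map_add' x y := by
    have hadd : ∀ (a b : Iw) (j : Fin 6), (a + b) j = a j + b j := fun _ _ _ => rfl
    funext i
    have hadd' : ∀ (a b : Fin 6 → ℝ) (j : Fin 6), (@HAdd.hAdd Iw Iw Iw _ a b) j = a j + b j := fun _ _ _ => rfl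
    simp only [hadd']
    fin_cases i <;> simp only [hadd, vmk0, vmk1, vmk2, vmk3, vmk4, vmk5] <;> ring
  map_smul' t x := by
    have hs : ∀ (a : Iw) (j : Fin 6), (t • a) j = t * a j := fun _ _ => rfl
    funext i
    have hs' : ∀ (a : Fin 6 → ℝ) (j : Fin 6), (@HSMul.hSMul ℝ Iw Iw _ t a) j = t * a j := fun _ _ => rfl
    simp only [RingHom.id_apply, hs']
    fin_cases i <;> simp only [hs, vmk0, vmk1, vmk2, vmk3, vmk4, vmk5, RingHom.id_apply] <;> ring

noncomputable def Kmap : Iw →ₗ[ℝ] Iw where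
  toFun x := ![2 * x 1, -2 * x 0, 2 * x 3, -2 * x 2, 2 * x 5, -2 * x 4]
  map_add' x y := by
    have hadd : ∀ (a b : Iw) (j : Fin 6), (a + b) j = a j + b j := fun _ _ _ => rfl
    funext i
    have hadd' : ∀ (a b : Fin 6 → ℝ) (j : Fin 6), (@HAdd.hAdd Iw Iw Iw _ a b) j = a j + b j := fun _ _ _ => rfl
    simp only [hadd']
    fin_cases i <;> simp only [hadd, vmk0, vmk1, vmk2, vmk3, vmk4, vmk5] <;> ring
  map_smul' t x := by
    have hs : ∀ (a : Iw) (j : Fin 6), (t • a) j = t * a j := fun _ _ => rfl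
    funext i
    have hs' : ∀ (a : Fin 6 → ℝ) (j : Fin 6), (@HSMul.hSMul ℝ Iw Iw _ t a) j = t * a j := fun _ _ => rfl
    simp only [RingHom.id_apply, hs']
    fin_cases i <;> simp only [hs, vmk0, vmk1, vmk2, vmk3, vmk4, vmk5, RingHom.id_apply] <;> ring

lemma J0 (x : Iw) : Jmap x 0 = -x 1 := rfl
lemma J1 (x : Iw) : Jmap x 1 = x 0 := rfl
lemma J2 (x : Iw) : Jmap x 2 = -x 3 := rfl
lemma J3 (x : Iw) : Jmap x 3 = x 2 := rfl
lemma J4 (x : Iw) : Jmap x 4 = -x 5 := rfl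
lemma J5 (x : Iw) : Jmap x 5 = x 4 := rfl
lemma K0 (x : Iw) : Kmap x 0 = 2 * x 1 := rfl
lemma K1 (x : Iw) : Kmap x 1 = -2 * x 0 := rfl
lemma K2 (x : Iw) : Kmap x 2 = 2 * x 3 := rfl
lemma K3 (x : Iw) : Kmap x 3 = -2 * x 2 := rfl
lemma K4 (x : Iw) : Kmap x 4 = 2 * x 5 := rfl
lemma K5 (x : Iw) : Kmap x 5 = -2 * x 4 := rfl

noncomputable def bas : Fin 6 → Iw := fun m => (Pi.basisFun ℝ (Fin 6)) m

lemma bas_apply (m j : Fin 6) : bas m j = if j = m then 1 else 0 := by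
  simp [bas, Pi.basisFun_apply, Pi.single_apply]

lemma ext_form6 {f g : Form Iw 6} (h : f bas = g bas) : f = g := by
  apply Module.Basis.ext_alternating (Pi.basisFun ℝ (Fin 6))
  intro v hv
  let σ : Equiv.Perm (Fin 6) := Equiv.ofBijective v (Finite.injective_iff_bijective.mp hv)
  have hb : (fun i => ((Pi.basisFun ℝ (Fin 6)) (v i) : Iw)) = bas ∘ σ := rfl
  rw [hb]
  calc f (bas ∘ ⇑σ) = Equiv.Perm.sign σ • f bas := f.map_perm bas σ
    _ = Equiv.Perm.sign σ • g bas := by rw [h]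
    _ = g (bas ∘ ⇑σ) := (g.map_perm bas σ).symm

lemma ext_form5 {f g : Form Iw 5}
    (h : ∀ m : Fin 6, f (fun j => bas (m.succAbove j)) = g (fun j => bas (m.succAbove j))) :
    f = g := by
  apply Module.Basis.ext_alternating (Pi.basisFun ℝ (Fin 6))
  intro v hv
  obtain ⟨m, hm⟩ : ∃ m : Fin 6, m ∉ Finset.univ.image v := by
    by_contra hc
    push_neg at hc
    have hsub : (Finset.univ : Finset (Fin 6)) ⊆ Finset.univ.image v := fun x _ => hc x
    have hle := Finset.card_le_card hsub
    have hax : (Finset.univ.image v).card ≤ 5 := by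
      rw [Finset.card_image_of_injective _ hv]
      simp
    simp only [Finset.card_univ, Fintype.card_fin] at hle
    omega
  have hne : ∀ i, v i ≠ m := fun i hi => hm (hi ▸ Finset.mem_image_of_mem v (Finset.mem_univ i))
  choose w hw using fun i => Fin.exists_succAbove_eq (hne i)
  have hwinj : Function.Injective w := by
    intro i j hij
    apply hv
    rw [← hw i, ← hw j, hij]
  let σ : Equiv.Perm (Fin 5) := Equiv.ofBijective w (Finite.injective_iff_bijective.mp hwinj)
  have hb : (fun i => ((Pi.basisFun ℝ (Fin 6)) (v i) : Iw)) = (fun j => bas (m.succAbove j)) ∘ σ := by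
    funext i
    show ((Pi.basisFun ℝ (Fin 6)) (v i) : Iw) = bas (m.succAbove (w i))
    rw [hw i]
    rfl
  rw [hb]
  calc f ((fun j => bas (m.succAbove j)) ∘ ⇑σ)
      = Equiv.Perm.sign σ • f (fun j => bas (m.succAbove j)) :=
        f.map_perm (fun j => bas (m.succAbove j)) σ
    _ = Equiv.Perm.sign σ • g (fun j => bas (m.succAbove j)) := by rw [h m]
    _ = g ((fun j => bas (m.succAbove j)) ∘ ⇑σ) :=
        (g.map_perm (fun j => bas (m.succAbove j)) σ).symm

end IwAux


section MainAux
open Equiv AlternatingMap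
set_option maxHeartbeats 6400000
set_option synthInstance.maxHeartbeats 1000000
set_option maxRecDepth 40000

instance : Module.Finite ℝ Iw := inferInstanceAs (Module.Finite ℝ (Fin 6 → ℝ))
instance : Module.Free ℝ Iw := inferInstanceAs (Module.Free ℝ (Fin 6 → ℝ))

lemma curryL {n : ℕ} (f : Form Iw (n + 1)) (m : Iw) (u : Fin n → Iw) :
    f.curryLeft m u = f (Matrix.vecCons m u) := rfl

lemma curryP (v y z : Iw) : iwPsip0.curryLeft v ![y, z] = iwPsip0 ![v, y, z] := rfl

lemma vn0 {α : Type*} (a b c d e f : α) : ![a, b, c, d, e, f] (0 : Fin 6) = a := rfl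
lemma vn1 {α : Type*} (a b c d e f : α) : ![a, b, c, d, e, f] (1 : Fin 6) = b := rfl
lemma vn2 {α : Type*} (a b c d e f : α) : ![a, b, c, d, e, f] (2 : Fin 6) = c := rfl
lemma vn3 {α : Type*} (a b c d e f : α) : ![a, b, c, d, e, f] (3 : Fin 6) = d := rfl
lemma vn4 {α : Type*} (a b c d e f : α) : ![a, b, c, d, e, f] (4 : Fin 6) = e := rfl
lemma vn5 {α : Type*} (a b c d e f : α) : ![a, b, c, d, e, f] (5 : Fin 6) = f := rfl

lemma fin0 : (⟨0, by omega⟩ : Fin 6) = (0 : Fin 6) := rfl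
lemma fin1 : (⟨1, by omega⟩ : Fin 6) = (1 : Fin 6) := rfl
lemma fin2 : (⟨2, by omega⟩ : Fin 6) = (2 : Fin 6) := rfl
lemma fin3 : (⟨3, by omega⟩ : Fin 6) = (3 : Fin 6) := rfl
lemma fin4 : (⟨4, by omega⟩ : Fin 6) = (4 : Fin 6) := rfl
lemma fin5 : (⟨5, by omega⟩ : Fin 6) = (5 : Fin 6) := rfl

lemma tupl0 : (fun j => bas (Fin.succAbove (⟨0, by omega⟩ : Fin 6) j)) = ![bas 1, bas 2, bas 3, bas 4, bas 5] := by
  funext j; fin_cases j <;> rfl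

lemma tupl1 : (fun j => bas (Fin.succAbove (⟨1, by omega⟩ : Fin 6) j)) = ![bas 0, bas 2, bas 3, bas 4, bas 5] := by
  funext j; fin_cases j <;> rfl

lemma tupl2 : (fun j => bas (Fin.succAbove (⟨2, by omega⟩ : Fin 6) j)) = ![bas 0, bas 1, bas 3, bas 4, bas 5] := by
  funext j; fin_cases j <;> rfl

lemma tupl3 : (fun j => bas (Fin.succAbove (⟨3, by omega⟩ : Fin 6) j)) = ![bas 0, bas 1, bas 2, bas 4, bas 5] := by
  funext j; fin_cases j <;> rfl

lemma tupl4 : (fun j => bas (Fin.succAbove (⟨4, by omega⟩ : Fin 6) j)) = ![bas 0, bas 1, bas 2, bas 3, bas 5] := by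
  funext j; fin_cases j <;> rfl

lemma tupl5 : (fun j => bas (Fin.succAbove (⟨5, by omega⟩ : Fin 6) j)) = ![bas 0, bas 1, bas 2, bas 3, bas 4] := by
  funext j; fin_cases j <;> rfl


lemma Kdef (y : Iw) : Kmap y = ![2 * y 1, -2 * y 0, 2 * y 3, -2 * y 2, 2 * y 5, -2 * y 4] := rfl
lemma Jdef (y : Iw) : Jmap y = ![-y 1, y 0, -y 3, y 2, -y 5, y 4] := rfl
lemma smul_c (c : ℝ) (y : Iw) (j : Fin 6) : (c • y) j = c * y j := rfl

lemma hfr : (Module.finrank ℝ Iw : ℝ) = 6 := by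
  have h : Module.finrank ℝ Iw = Module.finrank ℝ (Fin 6 → ℝ) := rfl
  rw [h, Module.finrank_fin_fun]
  norm_num

lemma hKK : Kmap ∘ₗ Kmap = (-4 : ℝ) • LinearMap.id := by
  apply LinearMap.ext
  intro x
  have Kdef' : ∀ y : Fin 6 → ℝ, Kmap y = ![2 * y 1, -2 * y 0, 2 * y 3, -2 * y 2, 2 * y 5, -2 * y 4] := fun y => rfl
  funext i
  fin_cases i <;>
    simp only [LinearMap.comp_apply, LinearMap.smul_apply, LinearMap.id_apply, fin0, fin1, fin2, fin3, fin4, fin5, Kdef, Kdef',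
      vn0, vn1, vn2, vn3, vn4, vn5, smul_c] <;> ring

lemma hlam : lamOf Kmap = -4 := by
  unfold lamOf
  haveI : Module.Finite ℝ Iw := inferInstanceAs (Module.Finite ℝ (Fin 6 → ℝ))
  rw [hKK, map_smul, LinearMap.trace_id]
  rw [smul_eq_mul, hfr]
  norm_num

lemma hJof : Jmap = Jof Kmap := by
  unfold Jof
  rw [hlam]
  have hs4 : Real.sqrt (-(-4 : ℝ)) = 2 := by
    rw [show -(-4 : ℝ) = 2 ^ 2 by norm_num, Real.sqrt_sq (by norm_num : (0:ℝ) ≤ 2)]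
  rw [hs4]
  apply LinearMap.ext
  intro x
  have smul_c' : ∀ (c : ℝ) (y : Fin 6 → ℝ) (j : Fin 6), (@HSMul.hSMul ℝ Iw Iw _ c y) j = c * y j := fun _ _ _ => rfl
  funext i
  fin_cases i <;>
    simp only [LinearMap.smul_apply, fin0, fin1, fin2, fin3, fin4, fin5, Jdef, Kdef, vn0, vn1, vn2, vn3, vn4, vn5, smul_c, smul_c'] <;>
    ring

lemma hIsK : IsKOf iwOm0 iwPsip0 Kmap := by
  intro v
  apply ext_form5
  intro m
  fin_cases m
  · rw [tupl0]
    rw [curryL, AlternatingMap.smul_apply, wedge42_apply, wedge23_apply]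
    simp only [vn0, vn1, vn2, vn3, vn4, vn5]
    simp only [wedge22_apply, curryP, om0_apply, psip_apply, K0, K1, K2, K3, K4, K5, vn0, vn1, vn2, vn3, vn4, vn5]
    simp only [Matrix.cons_val, Matrix.cons_val_zero, Matrix.cons_val_one, Matrix.cons_val_two, Matrix.cons_val_three, Matrix.head_cons, Matrix.tail_cons, bas_apply, Fin.reduceEq, ↓reduceIte]
    simp [bas_apply, K0, K1, K2, K3, K4, K5]
    try norm_num
    try ring
  · rw [tupl1]
    rw [curryL, AlternatingMap.smul_apply, wedge42_apply, wedge23_apply]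
    simp only [vn0, vn1, vn2, vn3, vn4, vn5]
    simp only [wedge22_apply, curryP, om0_apply, psip_apply, K0, K1, K2, K3, K4, K5, vn0, vn1, vn2, vn3, vn4, vn5]
    simp only [Matrix.cons_val, Matrix.cons_val_zero, Matrix.cons_val_one, Matrix.cons_val_two, Matrix.cons_val_three, Matrix.head_cons, Matrix.tail_cons, bas_apply, Fin.reduceEq, ↓reduceIte]
    simp [bas_apply, K0, K1, K2, K3, K4, K5]
    try norm_num
    try ring
  · rw [tupl2]
    rw [curryL, AlternatingMap.smul_apply, wedge42_apply, wedge23_apply]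
    simp only [vn0, vn1, vn2, vn3, vn4, vn5]
    simp only [wedge22_apply, curryP, om0_apply, psip_apply, K0, K1, K2, K3, K4, K5, vn0, vn1, vn2, vn3, vn4, vn5]
    simp only [Matrix.cons_val, Matrix.cons_val_zero, Matrix.cons_val_one, Matrix.cons_val_two, Matrix.cons_val_three, Matrix.head_cons, Matrix.tail_cons, bas_apply, Fin.reduceEq, ↓reduceIte]
    simp [bas_apply, K0, K1, K2, K3, K4, K5]
    try norm_num
    try ring
  · rw [tupl3]
    rw [curryL, AlternatingMap.smul_apply, wedge42_apply, wedge23_apply]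
    simp only [vn0, vn1, vn2, vn3, vn4, vn5]
    simp only [wedge22_apply, curryP, om0_apply, psip_apply, K0, K1, K2, K3, K4, K5, vn0, vn1, vn2, vn3, vn4, vn5]
    simp only [Matrix.cons_val, Matrix.cons_val_zero, Matrix.cons_val_one, Matrix.cons_val_two, Matrix.cons_val_three, Matrix.head_cons, Matrix.tail_cons, bas_apply, Fin.reduceEq, ↓reduceIte]
    simp [bas_apply, K0, K1, K2, K3, K4, K5]
    try norm_num
    try ring
  · rw [tupl4]
    rw [curryL, AlternatingMap.smul_apply, wedge42_apply, wedge23_apply]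
    simp only [vn0, vn1, vn2, vn3, vn4, vn5]
    simp only [wedge22_apply, curryP, om0_apply, psip_apply, K0, K1, K2, K3, K4, K5, vn0, vn1, vn2, vn3, vn4, vn5]
    simp only [Matrix.cons_val, Matrix.cons_val_zero, Matrix.cons_val_one, Matrix.cons_val_two, Matrix.cons_val_three, Matrix.head_cons, Matrix.tail_cons, bas_apply, Fin.reduceEq, ↓reduceIte]
    simp [bas_apply, K0, K1, K2, K3, K4, K5]
    try norm_num
    try ring
  · rw [tupl5]
    rw [curryL, AlternatingMap.smul_apply, wedge42_apply, wedge23_apply]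
    simp only [vn0, vn1, vn2, vn3, vn4, vn5]
    simp only [wedge22_apply, curryP, om0_apply, psip_apply, K0, K1, K2, K3, K4, K5, vn0, vn1, vn2, vn3, vn4, vn5]
    simp only [Matrix.cons_val, Matrix.cons_val_zero, Matrix.cons_val_one, Matrix.cons_val_two, Matrix.cons_val_three, Matrix.head_cons, Matrix.tail_cons, bas_apply, Fin.reduceEq, ↓reduceIte]
    simp [bas_apply, K0, K1, K2, K3, K4, K5]
    try norm_num
    try ring

end MainAux

set_option maxHeartbeats 6400000 in
set_option maxRecDepth 40000 in
theorem statement9 :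
    ∃ J : Iw →ₗ[ℝ] Iw,
      IsCoupledSU3 iwOm0 iwPsip0 iwPsim0 J (-1) ∧
      IsTorsionForm iwOm0 iwPsip0 iwPsim0 J (-1) iwW2 ∧
      (∀ x y z : Iw, d2 iwW2 x y z = (-(8 : ℝ) / 3) * iwPsip0 ![x, y, z]) := by
  have hvol : wedge (wedge iwOm0 iwOm0) iwOm0 ≠ 0 := by
    intro hcon
    have h1 : wedge (wedge iwOm0 iwOm0) iwOm0 bas = 0 := by rw [hcon]; rfl
    rw [wedge42_apply] at h1
    simp only [wedge22_apply, om0_apply] at h1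
    simp only [Matrix.cons_val, Matrix.cons_val_zero, Matrix.cons_val_one, Matrix.cons_val_two, Matrix.cons_val_three, Matrix.head_cons, Matrix.tail_cons, bas_apply, Fin.reduceEq, ↓reduceIte] at h1
    simp [bas_apply] at h1
    try norm_num at h1
  have hpsm : ∀ x y z : Iw, iwPsim0 ![x, y, z] = -iwPsip0 ![Jmap x, y, z] := by
    intro x y z
    rw [psim_apply, psip_apply]
    simp only [Jdef, vn0, vn1, vn2, vn3, vn4, vn5]
    ring
  have hcompat : wedge iwOm0 iwPsip0 = 0 := by
    apply ext_form5
    intro m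
    fin_cases m <;>
      [rw [tupl0]; rw [tupl1]; rw [tupl2]; rw [tupl3]; rw [tupl4]; rw [tupl5]] <;>
    · rw [wedge23_apply]
      simp only [om0_apply, psip_apply, Matrix.cons_val, Matrix.cons_val_zero, Matrix.cons_val_one, Matrix.cons_val_two, Matrix.cons_val_three, Matrix.head_cons, Matrix.tail_cons, bas_apply, Fin.reduceEq, ↓reduceIte]
      simp [om0_apply, psip_apply, bas_apply]
      try norm_num
  have hsym : ∀ x y : Iw, iwOm0 ![x, Jmap y] = iwOm0 ![y, Jmap x] := by
    intro x y
    rw [om0_apply, om0_apply]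
    simp only [Jdef, vn0, vn1, vn2, vn3, vn4, vn5]
    ring
  have hpos : ∀ x : Iw, x ≠ 0 → 0 < iwOm0 ![x, Jmap x] := by
    intro x hx
    have hex : ∃ i, x i ≠ 0 := by
      by_contra hc
      push_neg at hc
      exact hx (funext fun i => hc i)
    rw [om0_apply]
    simp only [Jdef, vn0, vn1, vn2, vn3, vn4, vn5]
    obtain ⟨i, hi⟩ := hex
    fin_cases i
    · have h2 : (0:ℝ) < x 0 * x 0 := mul_self_pos.mpr hi
      nlinarith [mul_self_nonneg (x 1), mul_self_nonneg (x 2), mul_self_nonneg (x 3), mul_self_nonneg (x 4), mul_self_nonneg (x 5)]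
    · have h2 : (0:ℝ) < x 1 * x 1 := mul_self_pos.mpr hi
      nlinarith [mul_self_nonneg (x 0), mul_self_nonneg (x 2), mul_self_nonneg (x 3), mul_self_nonneg (x 4), mul_self_nonneg (x 5)]
    · have h2 : (0:ℝ) < x 2 * x 2 := mul_self_pos.mpr hi
      nlinarith [mul_self_nonneg (x 0), mul_self_nonneg (x 1), mul_self_nonneg (x 3), mul_self_nonneg (x 4), mul_self_nonneg (x 5)]
    · have h2 : (0:ℝ) < x 3 * x 3 := mul_self_pos.mpr hi
      nlinarith [mul_self_nonneg (x 0), mul_self_nonneg (x 1), mul_self_nonneg (x 2), mul_self_nonneg (x 4), mul_self_nonneg (x 5)]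
    · have h2 : (0:ℝ) < x 4 * x 4 := mul_self_pos.mpr hi
      nlinarith [mul_self_nonneg (x 0), mul_self_nonneg (x 1), mul_self_nonneg (x 2), mul_self_nonneg (x 3), mul_self_nonneg (x 5)]
    · have h2 : (0:ℝ) < x 5 * x 5 := mul_self_pos.mpr hi
      nlinarith [mul_self_nonneg (x 0), mul_self_nonneg (x 1), mul_self_nonneg (x 2), mul_self_nonneg (x 3), mul_self_nonneg (x 4)]
  have hnorm : wedge iwPsip0 iwPsim0 = (2 / 3 : ℝ) • wedge (wedge iwOm0 iwOm0) iwOm0 := by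
    apply ext_form6
    rw [wedge33_apply, AlternatingMap.smul_apply, wedge42_apply]
    simp only [wedge22_apply, om0_apply, psip_apply, psim_apply]
    simp only [Matrix.cons_val, Matrix.cons_val_zero, Matrix.cons_val_one, Matrix.cons_val_two, Matrix.cons_val_three, Matrix.head_cons, Matrix.tail_cons, bas_apply, Fin.reduceEq, ↓reduceIte]
    simp [bas_apply]
    try norm_num
  have hcoupled : ∀ x y z : Iw, d2 iwOm0 x y z = (-1 : ℝ) * iwPsip0 ![x, y, z] := by
    intro x y z
    unfold d2
    rw [om0_apply, om0_apply, om0_apply, psip_apply]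
    simp only [br0, br1, br2, br3, br4, br5]
    ring
  have hprim : wedge (wedge iwW2 iwOm0) iwOm0 = 0 := by
    apply ext_form6
    rw [wedge42_apply]
    simp only [wedge22_apply, om0_apply, w2_apply]
    simp only [Matrix.cons_val, Matrix.cons_val_zero, Matrix.cons_val_one, Matrix.cons_val_two, Matrix.cons_val_three, Matrix.head_cons, Matrix.tail_cons, bas_apply, Fin.reduceEq, ↓reduceIte]
    simp [bas_apply]
    try norm_num
  have ht11 : ∀ x y : Iw, iwW2 ![Jmap x, Jmap y] = iwW2 ![x, y] := by
    intro x y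
    rw [w2_apply, w2_apply]
    simp only [Jdef, vn0, vn1, vn2, vn3, vn4, vn5]
    ring
  have hdpsim : ∀ x y z w : Iw, d3 iwPsim0 x y z w
      = -(2 / 3 : ℝ) * (-1) * wedge iwOm0 iwOm0 ![x, y, z, w]
        - wedge iwW2 iwOm0 ![x, y, z, w] := by
    intro x y z w
    unfold d3
    rw [wedge22_apply, wedge22_apply]
    simp only [psim_apply, om0_apply, w2_apply, Matrix.cons_val_zero, Matrix.cons_val_one,
      Matrix.head_cons, Matrix.cons_val_two, Matrix.cons_val_three, Matrix.tail_cons,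
      Matrix.cons_val_succ, Matrix.cons_val_fin_one]
    simp only [br0, br1, br2, br3, br4, br5]
    ring
  have hdw2 : ∀ x y z : Iw, d2 iwW2 x y z = (-(8 : ℝ) / 3) * iwPsip0 ![x, y, z] := by
    intro x y z
    unfold d2
    rw [w2_apply, w2_apply, w2_apply, psip_apply]
    simp only [br0, br1, br2, br3, br4, br5]
    ring
  refine ⟨Jmap, ⟨⟨hvol, ⟨Kmap, hIsK, ?_, hJof⟩, hpsm, hcompat, hsym, hpos, hnorm⟩,
      by norm_num, hcoupled⟩, ⟨hprim, ht11, hdpsim⟩, hdw2⟩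
  rw [hlam]
  norm_num
end
end
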